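/- arXiv:1907.05939 — 6 statements merged into one kernel-verified Lean document; each statement's English description precedes it below -/
import Mathlib

section
/- Fix constants c0, ρ0, H, R_a > 0 and c_min > 0. Let (c, ρ, γ) and (c', ρ', γ') be two parameter sets (with the same constants), and let ω1, ω2 be two distinct frequencies with ω_j > c0/(2H). If for both ω = ω1 and ω = ω2 one has v_ω(r) = v'_ω(r) for almost every r > 0, then c = c' almost everywhere, γ = γ' almost everywhere, and ρ(r) = ρ'(r) for every r > 0. -/
open MeasureTheory

/-- The radial part of the three-dimensional Laplacian:
`Δ_r f (r) = f''(r) + (2/r) f'(r)`. -/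
noncomputable def radialLaplacian (f : ℝ → ℝ) (r : ℝ) : ℝ :=
  deriv (deriv f) r + (2 / r) * deriv f r

/-- The Schrödinger potential arising from solar parameters `(c, ρ, γ)` at frequency `ω`:
`v_ω(r) = k_ω² − (ω² + 2iωγ(r))/c(r)² + ρ(r)^{1/2} Δ_r(ρ^{-1/2})(r)` with
`k_ω² = ω²/c0² − 1/(4H²)`. -/
noncomputable def solarPotential (c0 H : ℝ) (c ρ γ : ℝ → ℝ) (ω r : ℝ) : ℂ :=
  ((ω ^ 2 / c0 ^ 2 - 1 / (4 * H ^ 2) : ℝ) : ℂ)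
    - ((ω : ℂ) ^ 2 + 2 * Complex.I * (ω : ℂ) * ((γ r : ℝ) : ℂ)) / ((c r : ℝ) : ℂ) ^ 2
    + ((Real.sqrt (ρ r) * radialLaplacian (fun x => (Real.sqrt (ρ x))⁻¹) r : ℝ) : ℂ)

open Set
theorem extract (ω K gr gr' cr cr' Wr Wr' : ℝ) (hω : ω ≠ 0)
    (h : ((K : ℝ) : ℂ) - ((ω : ℂ)^2 + 2*Complex.I*(ω:ℂ)*((gr:ℝ):ℂ))/((cr:ℝ):ℂ)^2 + ((Wr:ℝ):ℂ)
       = ((K : ℝ) : ℂ) - ((ω : ℂ)^2 + 2*Complex.I*(ω:ℂ)*((gr':ℝ):ℂ))/((cr':ℝ):ℂ)^2 + ((Wr':ℝ):ℂ)) :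
    (ω^2/cr^2 - Wr = ω^2/cr'^2 - Wr') ∧ (gr/cr^2 = gr'/cr'^2) := by
  simp only [← Complex.ofReal_pow] at h
  have hre := congrArg Complex.re h
  have him := congrArg Complex.im h
  simp only [Complex.add_re, Complex.sub_re, Complex.add_im, Complex.sub_im,
    Complex.div_ofReal_re, Complex.div_ofReal_im, Complex.ofReal_re, Complex.ofReal_im,
    Complex.mul_re, Complex.mul_im, Complex.I_re, Complex.I_im,
    Complex.re_ofNat, Complex.im_ofNat] at hre him
  ring_nf at hre him
  constructor
  · rw [div_eq_mul_inv, div_eq_mul_inv, ← inv_pow, ← inv_pow]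
    linarith
  · have h3 : (2*ω) * (gr * (cr^2)⁻¹) = (2*ω) * (gr' * (cr'^2)⁻¹) := by
      rw [← inv_pow, ← inv_pow]; linarith
    have h4 := mul_left_cancel₀ (mul_ne_zero two_ne_zero hω) h3
    rw [div_eq_mul_inv, div_eq_mul_inv]
    exact h4

theorem eqOn_of_ae {f g : ℝ → ℝ} (hf : ContinuousOn f (Set.Ioi 0))
    (hg : ContinuousOn g (Set.Ioi 0))
    (h : ∀ᵐ r ∂(volume.restrict (Set.Ioi (0:ℝ))), f r = g r) :
    Set.EqOn f g (Set.Ioi 0) := by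
  intro x hx
  by_contra hne
  rw [ae_restrict_iff' measurableSet_Ioi] at h
  have hfc : ContinuousAt f x := hf.continuousAt (isOpen_Ioi.mem_nhds hx)
  have hgc : ContinuousAt g x := hg.continuousAt (isOpen_Ioi.mem_nhds hx)
  have h1 : ∀ᶠ y in nhds x, f y ≠ g y := by
    have : ContinuousAt (fun y => f y - g y) x := hfc.sub hgc
    have h2 : ∀ᶠ y in nhds x, f y - g y ≠ 0 := this.eventually_ne (sub_ne_zero.2 hne)
    exact h2.mono fun y hy => sub_ne_zero.1 hy
  have h2 : ∀ᶠ y in nhds x, y ∈ Set.Ioi (0:ℝ) := isOpen_Ioi.mem_nhds hx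
  obtain ⟨ε, hε, hball⟩ := Metric.eventually_nhds_iff_ball.1 (h1.and h2)
  have hsub : Metric.ball x ε ⊆ {r | ¬(r ∈ Set.Ioi (0:ℝ) → f r = g r)} := by
    intro y hy
    obtain ⟨hy1, hy2⟩ := hball y hy
    simp only [Set.mem_setOf_eq]
    intro hcontra
    exact hy1 (hcontra hy2)
  have : volume (Metric.ball x ε) = 0 := measure_mono_null hsub h
  exact absurd this (Metric.measure_ball_pos volume x hε).ne'

theorem reg {ρ : ℝ → ℝ} (hρ_pos : ∀ r > (0:ℝ), 0 < ρ r)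
    (hρ_C2 : ContDiffOn ℝ 2 ρ (Set.Ioi 0)) :
    ContinuousOn (fun x => (Real.sqrt (ρ x))⁻¹) (Ioi 0) ∧
    ContinuousOn (deriv (fun x => (Real.sqrt (ρ x))⁻¹)) (Ioi 0) ∧
    ContinuousOn (deriv (deriv (fun x => (Real.sqrt (ρ x))⁻¹))) (Ioi 0) ∧
    (∀ r ∈ Ioi (0:ℝ), HasDerivAt (fun x => (Real.sqrt (ρ x))⁻¹)
      (deriv (fun x => (Real.sqrt (ρ x))⁻¹) r) r) ∧
    (∀ r ∈ Ioi (0:ℝ), HasDerivAt (deriv (fun x => (Real.sqrt (ρ x))⁻¹))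
      (deriv (deriv (fun x => (Real.sqrt (ρ x))⁻¹)) r) r) := by
  have hu : ContDiffOn ℝ 2 (fun x => (Real.sqrt (ρ x))⁻¹) (Ioi 0) :=
    (hρ_C2.sqrt (fun x hx => (hρ_pos x hx).ne')).inv
      (fun x hx => (Real.sqrt_pos.2 (hρ_pos x hx)).ne')
  have hu1 : ContDiffOn ℝ 1 (deriv (fun x => (Real.sqrt (ρ x))⁻¹)) (Ioi 0) :=
    hu.deriv_of_isOpen isOpen_Ioi (by norm_num)
  refine ⟨hu.continuousOn, hu1.continuousOn,
    hu1.continuousOn_deriv_of_isOpen isOpen_Ioi le_rfl, ?_, ?_⟩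
  · intro r hr
    exact ((hu.contDiffAt (isOpen_Ioi.mem_nhds hr)).differentiableAt two_ne_zero).hasDerivAt
  · intro r hr
    exact ((hu1.contDiffAt (isOpen_Ioi.mem_nhds hr)).differentiableAt one_ne_zero).hasDerivAt

theorem ode_unique {u v W : ℝ → ℝ} {a b : ℝ} (ha : 0 < a) (hab : a < b)
    (hWcont : ContinuousOn W (Ioi 0))
    (hu1 : ∀ r ∈ Ioi (0:ℝ), HasDerivAt u (deriv u r) r)
    (hu2 : ∀ r ∈ Ioi (0:ℝ), HasDerivAt (deriv u) (deriv (deriv u) r) r)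
    (hv1 : ∀ r ∈ Ioi (0:ℝ), HasDerivAt v (deriv v r) r)
    (hv2 : ∀ r ∈ Ioi (0:ℝ), HasDerivAt (deriv v) (deriv (deriv v) r) r)
    (hodeu : ∀ r ∈ Ioi (0:ℝ), deriv (deriv u) r = W r * u r - (2/r) * deriv u r)
    (hodev : ∀ r ∈ Ioi (0:ℝ), deriv (deriv v) r = W r * v r - (2/r) * deriv v r)
    (hb : u b = v b) (hb' : deriv u b = deriv v b) :
    u a = v a := by
  have hIcc : Icc a b ⊆ Ioi (0:ℝ) := fun x hx => lt_of_lt_of_le ha hx.1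
  obtain ⟨C, hC⟩ := isCompact_Icc.exists_bound_of_continuousOn (hWcont.mono hIcc)
  set σ : ℝ → ℝ := fun t => max a (min b t) with hσdef
  have hσmem : ∀ t, σ t ∈ Icc a b :=
    fun t => ⟨le_max_left _ _, max_le hab.le (min_le_left _ _)⟩
  set F : ℝ → ℝ × ℝ → ℝ × ℝ :=
    fun t p => (p.2, W (σ t) * p.1 - (2 / σ t) * p.2) with hFdef
  set Kr : ℝ := max 1 (max C 0 + 2 / a) with hKdef
  have hKr0 : 0 ≤ Kr := le_trans zero_le_one (le_max_left _ _)
  set K : NNReal := Real.toNNReal Kr with hKNdef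
  have hKcoe : (K : ℝ) = Kr := Real.coe_toNNReal _ hKr0
  have hlip : ∀ t, LipschitzOnWith K (F t) univ := by
    intro t
    apply LipschitzWith.lipschitzOnWith
    apply LipschitzWith.of_dist_le_mul
    intro p q
    rw [hKcoe, Prod.dist_eq, Prod.dist_eq]
    have hd1 : dist p.1 q.1 ≤ max (dist p.1 q.1) (dist p.2 q.2) := le_max_left _ _
    have hd2 : dist p.2 q.2 ≤ max (dist p.1 q.1) (dist p.2 q.2) := le_max_right _ _
    have hdnn : 0 ≤ max (dist p.1 q.1) (dist p.2 q.2) := le_trans dist_nonneg hd1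
    apply max_le
    · calc dist p.2 q.2 ≤ max (dist p.1 q.1) (dist p.2 q.2) := hd2
        _ = 1 * _ := (one_mul _).symm
        _ ≤ Kr * _ := mul_le_mul_of_nonneg_right (le_max_left _ _) hdnn
    · have hσa : a ≤ σ t := (hσmem t).1
      have hσpos : 0 < σ t := lt_of_lt_of_le ha hσa
      have hWb : |W (σ t)| ≤ max C 0 := le_trans (hC _ (hσmem t)) (le_max_left _ _)
      have hBb : |2 / σ t| ≤ 2 / a := by
        rw [abs_of_nonneg (by positivity)]
        exact div_le_div_of_nonneg_left (by norm_num) ha hσa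
      simp only [hFdef, Real.dist_eq]
      have key : (W (σ t) * p.1 - 2 / σ t * p.2) - (W (σ t) * q.1 - 2 / σ t * q.2)
          = W (σ t) * (p.1 - q.1) - (2 / σ t) * (p.2 - q.2) := by ring
      rw [key]
      calc |W (σ t) * (p.1 - q.1) - (2 / σ t) * (p.2 - q.2)|
          ≤ |W (σ t) * (p.1 - q.1)| + |(2 / σ t) * (p.2 - q.2)| := abs_sub _ _
        _ = |W (σ t)| * |p.1 - q.1| + |2 / σ t| * |p.2 - q.2| := by
            rw [abs_mul, abs_mul]
        _ ≤ max C 0 * max (dist p.1 q.1) (dist p.2 q.2)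
            + (2 / a) * max (dist p.1 q.1) (dist p.2 q.2) := by
            refine add_le_add ?_ ?_
            · exact mul_le_mul hWb (by rw [← Real.dist_eq]; exact hd1) (abs_nonneg _)
                (le_max_right _ _)
            · exact mul_le_mul hBb (by rw [← Real.dist_eq]; exact hd2) (abs_nonneg _)
                (by positivity)
        _ = (max C 0 + 2 / a) * _ := by ring
        _ ≤ Kr * _ := mul_le_mul_of_nonneg_right (le_max_right _ _) hdnn
  set f : ℝ → ℝ × ℝ := fun t => (u t, deriv u t) with hfdef
  set g : ℝ → ℝ × ℝ := fun t => (v t, deriv v t) with hgdef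
  have hσeq : ∀ t ∈ Ioc a b, σ t = t := by
    intro t ht
    simp only [hσdef]
    rw [min_eq_right ht.2, max_eq_right ht.1.le]
  have hf' : ∀ t ∈ Ioc a b, HasDerivWithinAt f (F t (f t)) (Iic t) t := by
    intro t ht
    have htI : t ∈ Ioi (0:ℝ) := lt_trans ha ht.1
    have hd : HasDerivAt f (deriv u t, deriv (deriv u) t) t := (hu1 t htI).prodMk (hu2 t htI)
    have hval : F t (f t) = (deriv u t, deriv (deriv u) t) := by
      simp only [hFdef, hfdef]
      rw [hσeq t ht, hodeu t htI]
    rw [hval]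
    exact hd.hasDerivWithinAt
  have hg' : ∀ t ∈ Ioc a b, HasDerivWithinAt g (F t (g t)) (Iic t) t := by
    intro t ht
    have htI : t ∈ Ioi (0:ℝ) := lt_trans ha ht.1
    have hd : HasDerivAt g (deriv v t, deriv (deriv v) t) t := (hv1 t htI).prodMk (hv2 t htI)
    have hval : F t (g t) = (deriv v t, deriv (deriv v) t) := by
      simp only [hFdef, hgdef]
      rw [hσeq t ht, hodev t htI]
    rw [hval]
    exact hd.hasDerivWithinAt
  have hfc : ContinuousOn f (Icc a b) := continuousOn_of_forall_continuousAt fun t ht =>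
    ((hu1 t (hIcc ht)).continuousAt.prodMk (hu2 t (hIcc ht)).continuousAt)
  have hgc : ContinuousOn g (Icc a b) := continuousOn_of_forall_continuousAt fun t ht =>
    ((hv1 t (hIcc ht)).continuousAt.prodMk (hv2 t (hIcc ht)).continuousAt)
  have hfb : f b = g b := by
    simp only [hfdef, hgdef, hb, hb']
  have := ODE_solution_unique_of_mem_Icc_left (s := fun _ => univ) (fun t _ => hlip t)
    hfc hf' (fun _ _ => mem_univ _) hgc hg' (fun _ _ => mem_univ _) hfb
    (⟨le_rfl, hab.le⟩ : a ∈ Icc a b)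
  exact congrArg Prod.fst this

/-- Two frequencies above the acoustic cutoff determine sound speed, density and
attenuation from equality of the Schrödinger potentials (Corollary 2.4). -/
theorem stmt_2 (c0 ρ0 H Ra cmin : ℝ)
    (hc0 : 0 < c0) (hρ0 : 0 < ρ0) (hH : 0 < H) (hRa : 0 < Ra) (hcmin : 0 < cmin)
    (c ρ γ c' ρ' γ' : ℝ → ℝ)
    -- first parameter set
    (hc_meas : Measurable c)
    (hc_min : ∀ᵐ r ∂(volume.restrict (Set.Ioi (0 : ℝ))), cmin ≤ c r)
    (hγ_meas : Measurable γ) (hγ_bdd : ∃ M, ∀ r, |γ r| ≤ M)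
    (hρ_pos : ∀ r > (0 : ℝ), 0 < ρ r) (hρ_C2 : ContDiffOn ℝ 2 ρ (Set.Ioi 0))
    (hc_atm : ∀ r ≥ Ra, c r = c0)
    (hρ_atm : ∀ r ≥ Ra, ρ r = ρ0 * Real.exp (-(r - Ra) / H))
    (hγ_atm : ∀ r ≥ Ra, γ r = 0)
    -- second parameter set
    (hc'_meas : Measurable c')
    (hc'_min : ∀ᵐ r ∂(volume.restrict (Set.Ioi (0 : ℝ))), cmin ≤ c' r)
    (hγ'_meas : Measurable γ') (hγ'_bdd : ∃ M, ∀ r, |γ' r| ≤ M)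
    (hρ'_pos : ∀ r > (0 : ℝ), 0 < ρ' r) (hρ'_C2 : ContDiffOn ℝ 2 ρ' (Set.Ioi 0))
    (hc'_atm : ∀ r ≥ Ra, c' r = c0)
    (hρ'_atm : ∀ r ≥ Ra, ρ' r = ρ0 * Real.exp (-(r - Ra) / H))
    (hγ'_atm : ∀ r ≥ Ra, γ' r = 0)
    -- two distinct frequencies above the cutoff
    (ω1 ω2 : ℝ) (hω1 : ω1 > c0 / (2 * H)) (hω2 : ω2 > c0 / (2 * H)) (hωne : ω1 ≠ ω2)
    -- equality of the potentials at both frequencies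
    (heq1 : ∀ᵐ r ∂(volume.restrict (Set.Ioi (0 : ℝ))),
      solarPotential c0 H c ρ γ ω1 r = solarPotential c0 H c' ρ' γ' ω1 r)
    (heq2 : ∀ᵐ r ∂(volume.restrict (Set.Ioi (0 : ℝ))),
      solarPotential c0 H c ρ γ ω2 r = solarPotential c0 H c' ρ' γ' ω2 r) :
    (∀ᵐ r ∂(volume.restrict (Set.Ioi (0 : ℝ))), c r = c' r) ∧
    (∀ᵐ r ∂(volume.restrict (Set.Ioi (0 : ℝ))), γ r = γ' r) ∧
    (∀ r > (0 : ℝ), ρ r = ρ' r) := by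
  have hcut : 0 < c0 / (2 * H) := by positivity
  have hω1pos : 0 < ω1 := lt_trans hcut hω1
  have hω2pos : 0 < ω2 := lt_trans hcut hω2
  obtain ⟨hucont, hu1cont, hu2cont, hu1d, hu2d⟩ := reg hρ_pos hρ_C2
  obtain ⟨hvcont, hv1cont, hv2cont, hv1d, hv2d⟩ := reg hρ'_pos hρ'_C2
  set u : ℝ → ℝ := fun x => (Real.sqrt (ρ x))⁻¹ with hudef
  set v : ℝ → ℝ := fun x => (Real.sqrt (ρ' x))⁻¹ with hvdef
  set Wf : ℝ → ℝ := fun r => Real.sqrt (ρ r) * radialLaplacian u r with hWfdef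
  set Wg : ℝ → ℝ := fun r => Real.sqrt (ρ' r) * radialLaplacian v r with hWgdef
  -- Step A: pointwise a.e. consequences
  have hae : ∀ᵐ r ∂(volume.restrict (Set.Ioi (0 : ℝ))),
      (c r = c' r ∧ γ r = γ' r) ∧ Wf r = Wg r := by
    filter_upwards [heq1, heq2, hc_min, hc'_min] with r h1 h2 hcr hcr'
    simp only [solarPotential] at h1 h2
    have hcne : c r ≠ 0 := (lt_of_lt_of_le hcmin hcr).ne'
    have hc'ne : c' r ≠ 0 := (lt_of_lt_of_le hcmin hcr').ne'
    have e1 := extract ω1 (ω1^2/c0^2 - 1/(4*H^2)) (γ r) (γ' r) (c r) (c' r)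
      (Wf r) (Wg r) hω1pos.ne' h1
    have e2 := extract ω2 (ω2^2/c0^2 - 1/(4*H^2)) (γ r) (γ' r) (c r) (c' r)
      (Wf r) (Wg r) hω2pos.ne' h2
    have hfac : ω1^2 - ω2^2 ≠ 0 := by
      have : ω1^2 - ω2^2 = (ω1 - ω2) * (ω1 + ω2) := by ring
      rw [this]
      exact mul_ne_zero (sub_ne_zero.2 hωne) (by positivity)
    have hz : (((c r)^2)⁻¹ - ((c' r)^2)⁻¹) * (ω1^2 - ω2^2) = 0 := by
      linear_combination e1.1 - e2.1
    have hA : ((c r)^2)⁻¹ = ((c' r)^2)⁻¹ := by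
      rcases mul_eq_zero.1 hz with h | h
      · exact sub_eq_zero.1 h
      · exact absurd h hfac
    have hsq : (c r)^2 = (c' r)^2 := inv_injective hA
    have hceq : c r = c' r := by
      have h3 : (c r - c' r) * (c r + c' r) = 0 := by linear_combination hsq
      rcases mul_eq_zero.1 h3 with h | h
      · exact sub_eq_zero.1 h
      · have : 0 < c r + c' r := by
          have := lt_of_lt_of_le hcmin hcr
          have := lt_of_lt_of_le hcmin hcr'
          linarith
        exact absurd h this.ne'
    have hWeq : Wf r = Wg r := by
      have t := e1.1
      rw [hceq] at t
      linarith
    have hγeq : γ r = γ' r := by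
      have t := e1.2
      rw [hceq] at t
      field_simp [pow_ne_zero 2 hc'ne] at t
      exact t
    exact ⟨⟨hceq, hγeq⟩, hWeq⟩
  refine ⟨hae.mono fun r h => h.1.1, hae.mono fun r h => h.1.2, ?_⟩
  -- Step B: continuity of the potentials W
  have h2r : ContinuousOn (fun r : ℝ => 2 / r) (Ioi 0) :=
    continuousOn_const.div continuousOn_id (fun x hx => ne_of_gt hx)
  have hWcont : ContinuousOn Wf (Ioi 0) := by
    simp only [hWfdef, radialLaplacian]
    exact (Real.continuous_sqrt.comp_continuousOn hρ_C2.continuousOn).mul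
      (hu2cont.add (h2r.mul hu1cont))
  have hWgcont : ContinuousOn Wg (Ioi 0) := by
    simp only [hWgdef, radialLaplacian]
    exact (Real.continuous_sqrt.comp_continuousOn hρ'_C2.continuousOn).mul
      (hv2cont.add (h2r.mul hv1cont))
  have hWeqOn : Set.EqOn Wf Wg (Set.Ioi 0) :=
    eqOn_of_ae hWcont hWgcont (hae.mono fun r h => h.2)
  -- Step D: ODE relations
  have hodeu : ∀ r ∈ Ioi (0:ℝ), deriv (deriv u) r = Wf r * u r - (2/r) * deriv u r := by
    intro r hr
    have hs : Real.sqrt (ρ r) ≠ 0 := (Real.sqrt_pos.2 (hρ_pos r hr)).ne'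
    have hur : u r = (Real.sqrt (ρ r))⁻¹ := rfl
    simp only [hWfdef, radialLaplacian, hur]
    field_simp
    ring
  have hodev : ∀ r ∈ Ioi (0:ℝ), deriv (deriv v) r = Wf r * v r - (2/r) * deriv v r := by
    intro r hr
    rw [hWeqOn hr]
    have hs : Real.sqrt (ρ' r) ≠ 0 := (Real.sqrt_pos.2 (hρ'_pos r hr)).ne'
    have hvr : v r = (Real.sqrt (ρ' r))⁻¹ := rfl
    simp only [hWgdef, radialLaplacian, hvr]
    field_simp
    ring
  -- Step E: conclude density equality
  intro r hr0
  by_cases hr : Ra ≤ r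
  · rw [hρ_atm r hr, hρ'_atm r hr]
  · push_neg at hr
    have hbRa : Ra ≤ Ra + 1 := by linarith
    have hb : u (Ra + 1) = v (Ra + 1) := by
      have : ρ (Ra + 1) = ρ' (Ra + 1) := by
        rw [hρ_atm _ hbRa, hρ'_atm _ hbRa]
      simp only [hudef, hvdef, this]
    have hb' : deriv u (Ra + 1) = deriv v (Ra + 1) := by
      apply Filter.EventuallyEq.deriv_eq
      filter_upwards [Ioi_mem_nhds (show Ra < Ra + 1 by linarith)] with x hx
      have : ρ x = ρ' x := by rw [hρ_atm _ (le_of_lt hx), hρ'_atm _ (le_of_lt hx)]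
      simp only [hudef, hvdef, this]
    have huv : u r = v r :=
      ode_unique hr0 (by linarith : r < Ra + 1) hWcont hu1d hu2d hv1d hv2d
        hodeu hodev hb hb'
    have h1 : Real.sqrt (ρ r) = Real.sqrt (ρ' r) := inv_injective huv
    calc ρ r = (Real.sqrt (ρ r))^2 := (Real.sq_sqrt (hρ_pos r hr0).le).symm
      _ = (Real.sqrt (ρ' r))^2 := by rw [h1]
      _ = ρ' r := Real.sq_sqrt (hρ'_pos r hr0).le
end

section
/- Let k > 0, η ∈ ℝ, let ℓ ≥ 0 be an integer, and let σ_ℓ, σ_{ℓ+1} ∈ ℝ satisfy σ_{ℓ+1} − σ_ℓ = arg(ℓ+1+iη). For j ∈ {ℓ, ℓ+1} define θ_j(r) = k·r − η·log(2kr) − jπ/2 + σ_j. Let H_ℓ, H_{ℓ+1} : (0,∞) → ℂ be differentiable functions such that H_j(r) = exp(iθ_j(r)) + O(1/r) as r → +∞ for j = ℓ, ℓ+1, and such that for all r > 0 the recurrence H_ℓ'(r) = ((ℓ+1)/r + k·η/(ℓ+1))·H_ℓ(r) − k·√(1 + η²/(ℓ+1)²)·H_{ℓ+1}(r) holds. Then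 H_ℓ'(r) = ik·H_ℓ(r) + O(1/r) as r → +∞. -/
open Filter Asymptotics

/-- Derivative asymptotics of the Coulomb wave functions from Powell's recurrence:
if `H_j(r) = exp(iθ_j(r)) + O(1/r)` for `j = ℓ, ℓ+1`, where
`θ_j(r) = kr − η log(2kr) − jπ/2 + σ_j` and `σ_{ℓ+1} − σ_ℓ = arg(ℓ+1+iη)`, and
`H_ℓ' = ((ℓ+1)/r + kη/(ℓ+1)) H_ℓ − k √(1+η²/(ℓ+1)²) H_{ℓ+1}`, then
`H_ℓ'(r) = ik H_ℓ(r) + O(1/r)` as `r → +∞`. -/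
theorem stmt_5 (k η : ℝ) (hk : 0 < k) (ℓ : ℕ) (σl σl1 : ℝ)
    (hσ : σl1 - σl = Complex.arg ((ℓ : ℂ) + 1 + Complex.I * (η : ℂ)))
    (Hl Hl1 : ℝ → ℂ)
    (hHld : ∀ r > (0 : ℝ), DifferentiableAt ℝ Hl r)
    (hHl1d : ∀ r > (0 : ℝ), DifferentiableAt ℝ Hl1 r)
    (hasym_l : (fun r : ℝ => Hl r - Complex.exp (Complex.I *
        ((k * r - η * Real.log (2 * k * r) - (ℓ : ℝ) * Real.pi / 2 + σl : ℝ) : ℂ)))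
      =O[atTop] (fun r : ℝ => 1 / r))
    (hasym_l1 : (fun r : ℝ => Hl1 r - Complex.exp (Complex.I *
        ((k * r - η * Real.log (2 * k * r) - ((ℓ : ℝ) + 1) * Real.pi / 2 + σl1 : ℝ) : ℂ)))
      =O[atTop] (fun r : ℝ => 1 / r))
    (hrec : ∀ r > (0 : ℝ),
      deriv Hl r = ((((ℓ : ℝ) + 1) / r + k * η / ((ℓ : ℝ) + 1) : ℝ) : ℂ) * Hl r
        - ((k * Real.sqrt (1 + η ^ 2 / ((ℓ : ℝ) + 1) ^ 2) : ℝ) : ℂ) * Hl1 r) :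
    (fun r : ℝ => deriv Hl r - Complex.I * (k : ℂ) * Hl r) =O[atTop] (fun r : ℝ => 1 / r) := by
  set z : ℂ := (ℓ : ℂ) + 1 + Complex.I * (η : ℂ) with hzdef
  have hL : (0:ℝ) < (ℓ:ℝ) + 1 := by positivity
  have hzre : z.re = (ℓ:ℝ) + 1 := by simp [hzdef]
  have hzim : z.im = η := by simp [hzdef]
  have hz0 : z ≠ 0 := by
    intro h
    have := congrArg Complex.re h
    rw [hzre] at this
    simp at this
    linarith [hL, this]
  have habsz : ‖z‖ = Real.sqrt (((ℓ:ℝ)+1)^2 + η^2) := by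
    rw [Complex.norm_def, Complex.normSq_apply, hzre, hzim]
    ring_nf
  have habspos : (0:ℝ) < ‖z‖ := by
    simpa using (norm_pos_iff.mpr hz0)
  have hsqrt : Real.sqrt (1 + η^2 / ((ℓ:ℝ)+1)^2) = ‖z‖ / ((ℓ:ℝ)+1) := by
    rw [habsz]
    have h1 : 1 + η^2 / ((ℓ:ℝ)+1)^2 = (((ℓ:ℝ)+1)^2 + η^2) / ((ℓ:ℝ)+1)^2 := by
      field_simp
    rw [h1, Real.sqrt_div (by positivity), Real.sqrt_sq hL.le]
  -- the key complex identity
  set w : ℂ := Complex.exp (Complex.I * ((-(Real.pi/2) + Complex.arg z : ℝ) : ℂ)) with hwdef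
  set c : ℂ := ((k * η / ((ℓ:ℝ)+1) : ℝ) : ℂ) - Complex.I * k with hcdef
  set d : ℝ := k * Real.sqrt (1 + η^2 / ((ℓ:ℝ)+1)^2) with hddef
  have hargz : Complex.exp ((Complex.arg z : ℂ) * Complex.I) = z / ((‖z‖ : ℝ) : ℂ) := by
    rw [eq_div_iff (by exact_mod_cast habspos.ne')]
    rw [mul_comm]
    exact Complex.norm_mul_exp_arg_mul_I z
  have hexpneg : Complex.exp (((-(Real.pi/2) : ℝ) : ℂ) * Complex.I) = -Complex.I := by
    rw [Complex.exp_mul_I, ← Complex.ofReal_cos, ← Complex.ofReal_sin]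
    simp [Real.cos_pi_div_two, Real.sin_pi_div_two]
  have key : (d : ℂ) * w = c := by
    have hw : w = Complex.exp (((-(Real.pi/2) : ℝ) : ℂ) * Complex.I) *
        Complex.exp ((Complex.arg z : ℂ) * Complex.I) := by
      rw [hwdef, ← Complex.exp_add]
      congr 1
      push_cast
      ring
    rw [hw, hexpneg, hargz, hddef, hcdef]
    push_cast [hsqrt]
    have hLne : ((ℓ:ℂ) + 1) ≠ 0 := by
      intro h
      have := congrArg Complex.re h
      simp at this
      linarith [hL, this]
    have habsne : ((‖z‖ : ℝ) : ℂ) ≠ 0 := by exact_mod_cast habspos.ne'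
    field_simp
    rw [hzdef]
    ring_nf
    simp [Complex.I_sq]
  -- phase functions
  set e : ℝ → ℂ := fun r => Complex.exp (Complex.I *
    ((k * r - η * Real.log (2 * k * r) - (ℓ : ℝ) * Real.pi / 2 + σl : ℝ) : ℂ)) with hedef
  have he1 : ∀ r : ℝ, Complex.exp (Complex.I *
      ((k * r - η * Real.log (2 * k * r) - ((ℓ : ℝ) + 1) * Real.pi / 2 + σl1 : ℝ) : ℂ))
      = e r * w := by
    intro r
    rw [hedef, hwdef, ← Complex.exp_add]
    congr 1
    have hs : (σl1 : ℂ) - σl = ((Complex.arg z : ℝ) : ℂ) := by exact_mod_cast hσ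
    push_cast
    linear_combination Complex.I * hs
  -- norms of e are 1
  have hnorme : ∀ r : ℝ, ‖e r‖ = 1 := by
    intro r
    rw [hedef]
    simp [Complex.norm_exp]
  -- Hl is O(1)
  have hone : (fun r : ℝ => 1/r) =O[atTop] (fun _ : ℝ => (1:ℝ)) := by
    apply IsBigO.of_bound 1
    filter_upwards [eventually_ge_atTop (1:ℝ)] with r hr
    rw [norm_one, one_mul, norm_div, norm_one]
    rw [div_le_one (by rw [Real.norm_eq_abs, abs_of_pos (by linarith)]; linarith)]
    rw [Real.norm_eq_abs, abs_of_pos (by linarith)]; linarith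
  have heO : (fun r : ℝ => e r) =O[atTop] (fun _ : ℝ => (1:ℝ)) := by
    apply IsBigO.of_bound 1
    filter_upwards with r
    simp [hnorme r]
  have hHlO : Hl =O[atTop] (fun _ : ℝ => (1:ℝ)) := by
    have := (hasym_l.trans hone).add heO
    apply this.congr_left
    intro r
    simp [hedef]
  -- term 1
  have h1 : (fun r : ℝ => ((((ℓ:ℝ)+1)/r : ℝ) : ℂ) * Hl r) =O[atTop] (fun r : ℝ => 1/r) := by
    have ha : (fun r : ℝ => ((((ℓ:ℝ)+1)/r : ℝ) : ℂ)) =O[atTop] (fun r : ℝ => 1/r) := by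
      apply IsBigO.of_bound ((ℓ:ℝ)+1)
      filter_upwards with r
      rw [Complex.norm_real, Real.norm_eq_abs, Real.norm_eq_abs]
      rw [abs_div, one_div, abs_inv]
      rw [div_eq_mul_inv]
      gcongr
      simp [abs_of_pos hL]
    have := ha.mul hHlO
    apply this.congr_right
    intro r
    simp
  -- term 2
  have h2 : (fun r : ℝ => c * (Hl r - e r)) =O[atTop] (fun r : ℝ => 1/r) :=
    hasym_l.const_mul_left c
  -- term 3
  have h3 : (fun r : ℝ => (d : ℂ) * (Hl1 r - e r * w)) =O[atTop] (fun r : ℝ => 1/r) := by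
    apply IsBigO.const_mul_left
    apply hasym_l1.congr_left
    intro r
    rw [he1 r]
  have main := (h1.add h2).sub h3
  apply main.congr' _ EventuallyEq.rfl
  filter_upwards [eventually_gt_atTop (0:ℝ)] with r hr
  rw [hrec r hr]
  have hcc : (d : ℂ) * w = c := key
  rw [hcdef] at hcc
  simp only [hcdef]
  push_cast at hcc ⊢
  linear_combination (e r) * hcc
end

section
/- Let k > 0 and let q : (0,∞) → ℂ be continuous. Let φ, ψ be twice continuously differentiable solutions of −u'' + q·u = k²·u on (0,∞) whose constant Wronskian W = [φ,ψ] is nonzero, and define G(r,r') = −φ(min(r,r'))·ψ(max(r,r'))/W for r, r' > 0. Then for all 0 < ε < r1 ≤ r2 < R, writing u = conj(G(·,r1)) and w = G(·,r2): [u,w](R) − [u,w](ε) − 2i·∫_ε^R Im q(r)·conj(G(r,r1))·G(r,r2) dr = G(r1,r2) − conj(G(r2,r1)), where the Wronskians [u,w](t) = u(t)·w'(t) − u'(t)·w(t) at t = ε, R are well defined since ε, R ∉ {r1, r2}. -/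
/-- The Wronskian `[f,g](r) = f(r) g'(r) − f'(r) g(r)`. -/
noncomputable def wronskian (f g : ℝ → ℂ) (r : ℝ) : ℂ :=
  f r * deriv g r - deriv f r * g r

private lemma keyFTC (k : ℝ) (q f g : ℝ → ℂ) (hq : ContinuousOn q (Set.Ioi 0))
    (hfd : ∀ r > (0:ℝ), DifferentiableAt ℝ f r)
    (hfd2 : ∀ r > (0:ℝ), DifferentiableAt ℝ (deriv f) r)
    (hfeq : ∀ r > (0:ℝ), -deriv (deriv f) r + q r * f r = ((k:ℂ))^2 * f r)
    (hgd : ∀ r > (0:ℝ), DifferentiableAt ℝ g r)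
    (hgd2 : ∀ r > (0:ℝ), DifferentiableAt ℝ (deriv g) r)
    (hgeq : ∀ r > (0:ℝ), -deriv (deriv g) r + q r * g r = ((k:ℂ))^2 * g r)
    (a b : ℝ) (ha : 0 < a) (hb : 0 < b) :
    ∫ r in a..b, (q r - (starRingEnd ℂ) (q r)) * ((starRingEnd ℂ) (f r) * g r)
      = ((starRingEnd ℂ) (f b) * deriv g b - (starRingEnd ℂ) (deriv f b) * g b)
        - ((starRingEnd ℂ) (f a) * deriv g a - (starRingEnd ℂ) (deriv f a) * g a) := by
  have hsub : Set.uIcc a b ⊆ Set.Ioi 0 := by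
    intro x hx
    exact lt_of_lt_of_le (lt_min ha hb) hx.1
  apply intervalIntegral.integral_eq_sub_of_hasDerivAt
  · intro x hx
    have hx0 : (0:ℝ) < x := hsub hx
    have hf := (hfd x hx0).hasDerivAt
    have hf' := (hfd2 x hx0).hasDerivAt
    have hg := (hgd x hx0).hasDerivAt
    have hg' := (hgd2 x hx0).hasDerivAt
    have h1 : HasDerivAt (fun s => (starRingEnd ℂ) (f s)) ((starRingEnd ℂ) (deriv f x)) x := by
      simpa only [starRingEnd_apply] using hf.star
    have h2 : HasDerivAt (fun s => (starRingEnd ℂ) (deriv f s))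
        ((starRingEnd ℂ) (deriv (deriv f) x)) x := by
      simpa only [starRingEnd_apply] using hf'.star
    have hD := (h1.mul hg').sub (h2.mul hg)
    convert hD using 1
    · rfl
    have e1 : deriv (deriv g) x = q x * g x - ((k:ℂ))^2 * g x := by
      linear_combination -(hgeq x hx0)
    have e2 : (starRingEnd ℂ) (deriv (deriv f) x)
        = (starRingEnd ℂ) (q x) * (starRingEnd ℂ) (f x) - ((k:ℂ))^2 * (starRingEnd ℂ) (f x) := by
      have e : deriv (deriv f) x = q x * f x - ((k:ℂ))^2 * f x := by
        linear_combination -(hfeq x hx0)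
      rw [e]
      simp [map_sub, map_mul, map_pow, Complex.conj_ofReal]
    rw [e1, e2]
    ring
  · apply ContinuousOn.intervalIntegrable
    have hq' : ContinuousOn q (Set.uIcc a b) := hq.mono hsub
    have hfc : ContinuousOn f (Set.uIcc a b) :=
      fun x hx => ((hfd x (hsub hx)).continuousAt).continuousWithinAt
    have hgc : ContinuousOn g (Set.uIcc a b) :=
      fun x hx => ((hgd x (hsub hx)).continuousAt).continuousWithinAt
    have hqs : ContinuousOn (fun r => (starRingEnd ℂ) (q r)) (Set.uIcc a b) := by
      simpa only [starRingEnd_apply, Function.comp_def] using continuous_star.comp_continuousOn hq'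
    have hfs : ContinuousOn (fun r => (starRingEnd ℂ) (f r)) (Set.uIcc a b) := by
      simpa only [starRingEnd_apply, Function.comp_def] using continuous_star.comp_continuousOn hfc
    exact (hq'.sub hqs).mul (hfs.mul hgc)

/-- Green-type identity (3.20)–(3.21): for the radial Green's function
`G(r,r') = −φ(min) ψ(max)/W` built from two C² solutions of `−u'' + q u = k² u` with
constant nonzero Wronskian `W`, and any `0 < ε < r1 ≤ r2 < R`, writing
`u = conj(G(·,r1))`, `w = G(·,r2)`:
`[u,w](R) − [u,w](ε) − 2i ∫_ε^R Im q(r) conj(G(r,r1)) G(r,r2) dr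
  = G(r1,r2) − conj(G(r2,r1))`. -/
theorem stmt_9 (k : ℝ) (hk : 0 < k) (q : ℝ → ℂ) (hq : ContinuousOn q (Set.Ioi 0))
    (φ ψ : ℝ → ℂ) (W : ℂ) (hW0 : W ≠ 0)
    (hφd : ∀ r > (0 : ℝ), DifferentiableAt ℝ φ r)
    (hφd2 : ∀ r > (0 : ℝ), DifferentiableAt ℝ (deriv φ) r)
    (hφc2 : ContinuousOn (deriv (deriv φ)) (Set.Ioi 0))
    (hφeq : ∀ r > (0 : ℝ), -deriv (deriv φ) r + q r * φ r = ((k : ℂ)) ^ 2 * φ r)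
    (hψd : ∀ r > (0 : ℝ), DifferentiableAt ℝ ψ r)
    (hψd2 : ∀ r > (0 : ℝ), DifferentiableAt ℝ (deriv ψ) r)
    (hψc2 : ContinuousOn (deriv (deriv ψ)) (Set.Ioi 0))
    (hψeq : ∀ r > (0 : ℝ), -deriv (deriv ψ) r + q r * ψ r = ((k : ℂ)) ^ 2 * ψ r)
    (hW : ∀ r > (0 : ℝ), wronskian φ ψ r = W)
    (G : ℝ → ℝ → ℂ)
    (hG : ∀ r r' : ℝ, G r r' = -(φ (min r r') * ψ (max r r')) / W) :
    ∀ ε r1 r2 R : ℝ, 0 < ε → ε < r1 → r1 ≤ r2 → r2 < R →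
      wronskian (fun r => (starRingEnd ℂ) (G r r1)) (fun r => G r r2) R
        - wronskian (fun r => (starRingEnd ℂ) (G r r1)) (fun r => G r r2) ε
        - 2 * Complex.I *
          ∫ r in ε..R, (((q r).im : ℝ) : ℂ) * (starRingEnd ℂ) (G r r1) * G r r2
      = G r1 r2 - (starRingEnd ℂ) (G r2 r1) := by
  intro ε r1 r2 R hε hε1 h12 h2R
  have hr1 : (0:ℝ) < r1 := hε.trans hε1
  have hr2 : (0:ℝ) < r2 := lt_of_lt_of_le hr1 h12
  have hR : (0:ℝ) < R := hr2.trans h2R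
  have hε2 : ε < r2 := lt_of_lt_of_le hε1 h12
  have h1R : r1 < R := lt_of_le_of_lt h12 h2R
  have hWc0 : (starRingEnd ℂ) W ≠ 0 := by simpa using hW0
  -- generic derivative computations
  have hderc : ∀ (c : ℂ) (f : ℝ → ℂ), (∀ r > (0:ℝ), DifferentiableAt ℝ f r) → ∀ x, 0 < x →
      deriv (fun r => c * (starRingEnd ℂ) (f r)) x = c * (starRingEnd ℂ) (deriv f x) := by
    intro c f hf x hx
    simpa only [starRingEnd_apply] using (((hf x hx).hasDerivAt).star.const_mul c).deriv
  have hder : ∀ (c : ℂ) (f : ℝ → ℂ), (∀ r > (0:ℝ), DifferentiableAt ℝ f r) → ∀ x, 0 < x →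
      deriv (fun r => c * f r) x = c * deriv f x := by
    intro c f hf x hx
    exact (((hf x hx).hasDerivAt).const_mul c).deriv
  -- Wronskian at ε : both factors are φ-type
  have hWrε : wronskian (fun r => (starRingEnd ℂ) (G r r1)) (fun r => G r r2) ε
      = ((starRingEnd ℂ) (-(ψ r1) / W) * (-(ψ r2) / W)) *
        ((starRingEnd ℂ) (φ ε) * deriv φ ε - (starRingEnd ℂ) (deriv φ ε) * φ ε) := by
    have hu_ε : (fun r => (starRingEnd ℂ) (G r r1))
        =ᶠ[nhds ε] fun r => (starRingEnd ℂ) (-(ψ r1) / W) * (starRingEnd ℂ) (φ r) := by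
      filter_upwards [Ioo_mem_nhds hε hε1] with r hr
      rw [hG, min_eq_left hr.2.le, max_eq_right hr.2.le, ← map_mul]
      congr 1
      ring
    have hw_ε : (fun r => G r r2) =ᶠ[nhds ε] fun r => (-(ψ r2) / W) * φ r := by
      filter_upwards [Ioo_mem_nhds hε hε2] with r hr
      rw [hG, min_eq_left hr.2.le, max_eq_right hr.2.le]
      ring
    rw [wronskian, hu_ε.deriv_eq, hw_ε.deriv_eq, hderc _ φ hφd ε hε, hder _ φ hφd ε hε]
    have h1 : (starRingEnd ℂ) (G ε r1) = (starRingEnd ℂ) (-(ψ r1) / W) * (starRingEnd ℂ) (φ ε) := by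
      rw [hG, min_eq_left hε1.le, max_eq_right hε1.le, ← map_mul]
      congr 1
      ring
    have h2 : G ε r2 = (-(ψ r2) / W) * φ ε := by
      rw [hG, min_eq_left hε2.le, max_eq_right hε2.le]
      ring
    rw [h1, h2]
    ring
  -- Wronskian at R : both factors are ψ-type
  have hWrR : wronskian (fun r => (starRingEnd ℂ) (G r r1)) (fun r => G r r2) R
      = ((starRingEnd ℂ) (-(φ r1) / W) * (-(φ r2) / W)) *
        ((starRingEnd ℂ) (ψ R) * deriv ψ R - (starRingEnd ℂ) (deriv ψ R) * ψ R) := by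
    have hu_R : (fun r => (starRingEnd ℂ) (G r r1))
        =ᶠ[nhds R] fun r => (starRingEnd ℂ) (-(φ r1) / W) * (starRingEnd ℂ) (ψ r) := by
      filter_upwards [Ioi_mem_nhds h1R] with r hr
      rw [hG, min_eq_right (le_of_lt hr), max_eq_left (le_of_lt hr), ← map_mul]
      congr 1
      ring
    have hw_R : (fun r => G r r2) =ᶠ[nhds R] fun r => (-(φ r2) / W) * ψ r := by
      filter_upwards [Ioi_mem_nhds h2R] with r hr
      rw [hG, min_eq_right (le_of_lt hr), max_eq_left (le_of_lt hr)]
      ring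
    rw [wronskian, hu_R.deriv_eq, hw_R.deriv_eq, hderc _ ψ hψd R hR, hder _ ψ hψd R hR]
    have h1 : (starRingEnd ℂ) (G R r1) = (starRingEnd ℂ) (-(φ r1) / W) * (starRingEnd ℂ) (ψ R) := by
      rw [hG, min_eq_right h1R.le, max_eq_left h1R.le, ← map_mul]
      congr 1
      ring
    have h2 : G R r2 = (-(φ r2) / W) * ψ R := by
      rw [hG, min_eq_right h2R.le, max_eq_left h2R.le]
      ring
    rw [h1, h2]
    ring
  -- continuity of G in first variable
  have hφc : ContinuousOn φ (Set.Ioi 0) := fun x hx => (hφd x hx).continuousAt.continuousWithinAt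
  have hψc : ContinuousOn ψ (Set.Ioi 0) := fun x hx => (hψd x hx).continuousAt.continuousWithinAt
  have hGc : ∀ r' : ℝ, 0 < r' → ContinuousOn (fun r => G r r') (Set.Ioi 0) := by
    intro r' hr'
    have hmin : ContinuousOn (fun r => φ (min r r')) (Set.Ioi 0) :=
      hφc.comp (continuous_id.min continuous_const).continuousOn (fun x hx => lt_min hx hr')
    have hmax : ContinuousOn (fun r => ψ (max r r')) (Set.Ioi 0) :=
      hψc.comp (continuous_id.max continuous_const).continuousOn
        (fun x hx => lt_of_lt_of_le hr' (le_max_right x r'))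
    exact (((hmin.mul hmax).neg).div_const W).congr (fun r _ => hG r r')
  have hIcont : ContinuousOn
      (fun r => (q r - (starRingEnd ℂ) (q r)) * ((starRingEnd ℂ) (G r r1) * G r r2))
      (Set.Ioi 0) := by
    have h1 := hGc r1 hr1
    have h2 := hGc r2 hr2
    have hqs : ContinuousOn (fun r => (starRingEnd ℂ) (q r)) (Set.Ioi 0) := by
      simpa only [starRingEnd_apply, Function.comp_def] using continuous_star.comp_continuousOn hq
    have h1s : ContinuousOn (fun r => (starRingEnd ℂ) (G r r1)) (Set.Ioi 0) := by
      simpa only [starRingEnd_apply, Function.comp_def] using continuous_star.comp_continuousOn h1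
    exact (hq.sub hqs).mul (h1s.mul h2)
  have hint : ∀ a b : ℝ, 0 < a → 0 < b → IntervalIntegrable
      (fun r => (q r - (starRingEnd ℂ) (q r)) * ((starRingEnd ℂ) (G r r1) * G r r2))
      MeasureTheory.volume a b := by
    intro a b ha hb
    apply ContinuousOn.intervalIntegrable
    apply hIcont.mono
    intro x hx
    exact lt_of_lt_of_le (lt_min ha hb) hx.1
  have hIrw : 2 * Complex.I *
      (∫ r in ε..R, (((q r).im : ℝ) : ℂ) * (starRingEnd ℂ) (G r r1) * G r r2)
      = ∫ r in ε..R, (q r - (starRingEnd ℂ) (q r)) * ((starRingEnd ℂ) (G r r1) * G r r2) := by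
    rw [← intervalIntegral.integral_const_mul]
    apply intervalIntegral.integral_congr
    intro r _
    beta_reduce
    rw [Complex.sub_conj]
    push_cast
    ring
  have hsplitA := intervalIntegral.integral_add_adjacent_intervals
    (hint ε r1 hε hr1) (hint r1 R hr1 hR)
  have hsplitB := intervalIntegral.integral_add_adjacent_intervals
    (hint r1 r2 hr1 hr2) (hint r2 R hr2 hR)
  have hp1 : (∫ r in ε..r1, (q r - (starRingEnd ℂ) (q r)) * ((starRingEnd ℂ) (G r r1) * G r r2))
      = ((starRingEnd ℂ) (-(ψ r1) / W) * (-(ψ r2) / W)) *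
        (((starRingEnd ℂ) (φ r1) * deriv φ r1 - (starRingEnd ℂ) (deriv φ r1) * φ r1)
          - ((starRingEnd ℂ) (φ ε) * deriv φ ε - (starRingEnd ℂ) (deriv φ ε) * φ ε)) := by
    have hcg : Set.EqOn
        (fun r => (q r - (starRingEnd ℂ) (q r)) * ((starRingEnd ℂ) (G r r1) * G r r2))
        (fun r => ((starRingEnd ℂ) (-(ψ r1) / W) * (-(ψ r2) / W)) *
          ((q r - (starRingEnd ℂ) (q r)) * ((starRingEnd ℂ) (φ r) * φ r)))
        (Set.uIcc ε r1) := by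
      intro r hr
      beta_reduce
      rw [Set.uIcc_of_le hε1.le] at hr
      rw [hG r r1, hG r r2, min_eq_left hr.2, max_eq_right hr.2,
        min_eq_left (hr.2.trans h12), max_eq_right (hr.2.trans h12)]
      simp only [map_div₀, map_neg, map_mul]
      ring
    rw [intervalIntegral.integral_congr hcg, intervalIntegral.integral_const_mul,
      keyFTC k q φ φ hq hφd hφd2 hφeq hφd hφd2 hφeq ε r1 hε hr1]
  have hp2 : (∫ r in r1..r2, (q r - (starRingEnd ℂ) (q r)) * ((starRingEnd ℂ) (G r r1) * G r r2))
      = ((starRingEnd ℂ) (-(φ r1) / W) * (-(ψ r2) / W)) *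
        (((starRingEnd ℂ) (ψ r2) * deriv φ r2 - (starRingEnd ℂ) (deriv ψ r2) * φ r2)
          - ((starRingEnd ℂ) (ψ r1) * deriv φ r1 - (starRingEnd ℂ) (deriv ψ r1) * φ r1)) := by
    have hcg : Set.EqOn
        (fun r => (q r - (starRingEnd ℂ) (q r)) * ((starRingEnd ℂ) (G r r1) * G r r2))
        (fun r => ((starRingEnd ℂ) (-(φ r1) / W) * (-(ψ r2) / W)) *
          ((q r - (starRingEnd ℂ) (q r)) * ((starRingEnd ℂ) (ψ r) * φ r)))
        (Set.uIcc r1 r2) := by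
      intro r hr
      beta_reduce
      rw [Set.uIcc_of_le h12] at hr
      rw [hG r r1, hG r r2, min_eq_right hr.1, max_eq_left hr.1,
        min_eq_left hr.2, max_eq_right hr.2]
      simp only [map_div₀, map_neg, map_mul]
      ring
    rw [intervalIntegral.integral_congr hcg, intervalIntegral.integral_const_mul,
      keyFTC k q ψ φ hq hψd hψd2 hψeq hφd hφd2 hφeq r1 r2 hr1 hr2]
  have hp3 : (∫ r in r2..R, (q r - (starRingEnd ℂ) (q r)) * ((starRingEnd ℂ) (G r r1) * G r r2))
      = ((starRingEnd ℂ) (-(φ r1) / W) * (-(φ r2) / W)) *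
        (((starRingEnd ℂ) (ψ R) * deriv ψ R - (starRingEnd ℂ) (deriv ψ R) * ψ R)
          - ((starRingEnd ℂ) (ψ r2) * deriv ψ r2 - (starRingEnd ℂ) (deriv ψ r2) * ψ r2)) := by
    have hcg : Set.EqOn
        (fun r => (q r - (starRingEnd ℂ) (q r)) * ((starRingEnd ℂ) (G r r1) * G r r2))
        (fun r => ((starRingEnd ℂ) (-(φ r1) / W) * (-(φ r2) / W)) *
          ((q r - (starRingEnd ℂ) (q r)) * ((starRingEnd ℂ) (ψ r) * ψ r)))
        (Set.uIcc r2 R) := by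
      intro r hr
      beta_reduce
      rw [Set.uIcc_of_le h2R.le] at hr
      rw [hG r r1, hG r r2, min_eq_right (h12.trans hr.1), max_eq_left (h12.trans hr.1),
        min_eq_right hr.1, max_eq_left hr.1]
      simp only [map_div₀, map_neg, map_mul]
      ring
    rw [intervalIntegral.integral_congr hcg, intervalIntegral.integral_const_mul,
      keyFTC k q ψ ψ hq hψd hψd2 hψeq hψd hψd2 hψeq r2 R hr2 hR]
  have hR1 : G r1 r2 = -(φ r1 * ψ r2) / W := by
    rw [hG, min_eq_left h12, max_eq_right h12]
  have hR2 : (starRingEnd ℂ) (G r2 r1) = (starRingEnd ℂ) (-(φ r1 * ψ r2) / W) := by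
    rw [hG, min_eq_right h12, max_eq_left h12]
  have hW1 : φ r1 * deriv ψ r1 - deriv φ r1 * ψ r1 = W := hW r1 hr1
  have hW2 : φ r2 * deriv ψ r2 - deriv φ r2 * ψ r2 = W := hW r2 hr2
  have hW1c : (starRingEnd ℂ) (φ r1) * (starRingEnd ℂ) (deriv ψ r1)
      - (starRingEnd ℂ) (deriv φ r1) * (starRingEnd ℂ) (ψ r1) = (starRingEnd ℂ) W := by
    have := congrArg (starRingEnd ℂ) hW1
    simpa only [map_sub, map_mul] using this
  have hW2c : (starRingEnd ℂ) (φ r2) * (starRingEnd ℂ) (deriv ψ r2)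
      - (starRingEnd ℂ) (deriv φ r2) * (starRingEnd ℂ) (ψ r2) = (starRingEnd ℂ) W := by
    have := congrArg (starRingEnd ℂ) hW2
    simpa only [map_sub, map_mul] using this
  rw [hWrε, hWrR, hIrw, ← hsplitA, ← hsplitB, hp1, hp2, hp3, hR1, hR2]
  simp only [map_div₀, map_neg, map_mul]
  field_simp
  linear_combination (1 : ℂ) *
    ((-(ψ r2 * φ r1)) * hW1c + ((starRingEnd ℂ) (φ r1) * (starRingEnd ℂ) (ψ r2)) * hW2)
end

section
/- Let k > 0, R_a > 0, and let q : (0,∞) → ℂ be continuous, with Im q bounded and Im q(r) = 0 for all r ≥ R_a. Let φ, ψ be twice continuously differentiable solutions of −u'' + q·u = k²·u on (0,∞) with constant nonzero Wronskian W = [φ,ψ], and define G(r,r') = −φ(min(r,r'))·ψ(max(r,r'))/W. Assume: φ(r) = O(r) and φ'(r) = O(1) as r → 0⁺; ψ is bounded on [1,∞); and ψ'(r) − ik·ψ(r) = O(1/r) as r → +∞. Then for all fixed 0 < r1 ≤ r2: ∫_0^R (−Im q(r))·conj(G(r,r1))·G(r,r2) dr + k·conj(G(R,r1))·G(R,r2)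 = Im G(r1,r2) + O(1/R) as R → +∞. -/
open Filter Asymptotics

namespace Stmt10Aux

open Complex MeasureTheory Set

/-- The "energy flux" bilinear expression `conj(u) v' − conj(u') v`. -/
noncomputable def flux (u v : ℝ → ℂ) (r : ℝ) : ℂ :=
  (starRingEnd ℂ) (u r) * deriv v r - (starRingEnd ℂ) (deriv u r) * v r

theorem flux_hasDerivAt (q : ℝ → ℂ) (k : ℝ) (u v : ℝ → ℂ) {r : ℝ}
    (hud : DifferentiableAt ℝ u r) (hud2 : DifferentiableAt ℝ (deriv u) r)
    (hvd : DifferentiableAt ℝ v r) (hvd2 : DifferentiableAt ℝ (deriv v) r)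
    (hueq : -deriv (deriv u) r + q r * u r = ((k : ℂ)) ^ 2 * u r)
    (hveq : -deriv (deriv v) r + q r * v r = ((k : ℂ)) ^ 2 * v r) :
    HasDerivAt (flux u v)
      ((q r - (starRingEnd ℂ) (q r)) * ((starRingEnd ℂ) (u r) * v r)) r := by
  have h1 : HasDerivAt (fun s => (starRingEnd ℂ) (u s)) ((starRingEnd ℂ) (deriv u r)) r := by
    simpa only [starRingEnd_apply] using hud.hasDerivAt.star
  have h2 : HasDerivAt (fun s => (starRingEnd ℂ) (deriv u s))
      ((starRingEnd ℂ) (deriv (deriv u) r)) r := by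
    simpa only [starRingEnd_apply] using hud2.hasDerivAt.star
  have H := (h1.mul hvd2.hasDerivAt).sub (h2.mul hvd.hasDerivAt)
  have e1 : deriv (deriv v) r = q r * v r - ((k : ℂ)) ^ 2 * v r := by linear_combination -hveq
  have e2 : deriv (deriv u) r = q r * u r - ((k : ℂ)) ^ 2 * u r := by linear_combination -hueq
  unfold flux
  refine H.congr_deriv ?_
  rw [e1, e2]
  simp only [map_sub, map_mul, map_pow, Complex.conj_ofReal]
  ring

theorem exists_bound_Ioc {f : ℝ → ℂ} {b : ℝ} (hb : 0 < b)
    (hO : f =O[nhdsWithin 0 (Set.Ioi 0)] (fun _ : ℝ => (1 : ℝ)))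
    (hc : ContinuousOn f (Set.Ioi 0)) :
    ∃ C, ∀ r ∈ Set.Ioc (0 : ℝ) b, ‖f r‖ ≤ C := by
  obtain ⟨c, hc'⟩ := hO.bound
  rw [eventually_nhdsWithin_iff, Metric.eventually_nhds_iff] at hc'
  obtain ⟨ε, hε, hball⟩ := hc'
  set m := min (ε / 2) b with hm
  have hm0 : 0 < m := lt_min (by linarith) hb
  obtain ⟨C2, hC2⟩ := (isCompact_Icc (a := m) (b := b)).exists_bound_of_continuousOn
      (hc.mono (fun x hx => lt_of_lt_of_le hm0 hx.1))
  refine ⟨max (c * ‖(1 : ℝ)‖) C2, fun r hr => ?_⟩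
  rcases lt_or_ge r m with h | h
  · refine le_trans (hball (y := r) ?_ hr.1) (le_max_left _ _)
    rw [Real.dist_eq, sub_zero, abs_of_pos hr.1]
    calc r < m := h
    _ ≤ ε / 2 := min_le_left _ _
    _ < ε := by linarith
  · exact le_trans (hC2 r ⟨h, hr.2⟩) (le_max_right _ _)

end Stmt10Aux

set_option maxHeartbeats 2000000 in
open Stmt10Aux MeasureTheory in
/-- Deterministic core of Proposition 2.1: for the radial Green's function
`G(r,r') = −φ(min) ψ(max)/W` with regular `φ` (i.e. `φ(r) = O(r)`, `φ'(r) = O(1)` as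
`r → 0⁺`) and outgoing `ψ` (bounded on `[1,∞)` with `ψ' − ikψ = O(1/r)`), and sources
excited in the volume with power `−Im q` (with `Im q` bounded, vanishing for `r ≥ Ra`)
and on the sphere `r = R` with power `k`:
`∫_0^R (−Im q) conj(G(·,r1)) G(·,r2) + k conj(G(R,r1)) G(R,r2) = Im G(r1,r2) + O(1/R)`
as `R → +∞`. -/
theorem stmt_10 (k Ra : ℝ) (hk : 0 < k) (hRa : 0 < Ra)
    (q : ℝ → ℂ) (hq : ContinuousOn q (Set.Ioi 0))
    (hqbdd : ∃ M, ∀ r > (0 : ℝ), |(q r).im| ≤ M)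
    (hqatm : ∀ r ≥ Ra, (q r).im = 0)
    (φ ψ : ℝ → ℂ) (W : ℂ) (hW0 : W ≠ 0)
    (hφd : ∀ r > (0 : ℝ), DifferentiableAt ℝ φ r)
    (hφd2 : ∀ r > (0 : ℝ), DifferentiableAt ℝ (deriv φ) r)
    (hφc2 : ContinuousOn (deriv (deriv φ)) (Set.Ioi 0))
    (hφeq : ∀ r > (0 : ℝ), -deriv (deriv φ) r + q r * φ r = ((k : ℂ)) ^ 2 * φ r)
    (hψd : ∀ r > (0 : ℝ), DifferentiableAt ℝ ψ r)
    (hψd2 : ∀ r > (0 : ℝ), DifferentiableAt ℝ (deriv ψ) r)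
    (hψc2 : ContinuousOn (deriv (deriv ψ)) (Set.Ioi 0))
    (hψeq : ∀ r > (0 : ℝ), -deriv (deriv ψ) r + q r * ψ r = ((k : ℂ)) ^ 2 * ψ r)
    (hW : ∀ r > (0 : ℝ), wronskian φ ψ r = W)
    (hφ0 : φ =O[nhdsWithin 0 (Set.Ioi 0)] (fun r : ℝ => r))
    (hφ0' : (deriv φ) =O[nhdsWithin 0 (Set.Ioi 0)] (fun _ : ℝ => (1 : ℝ)))
    (hψbdd : ∃ C, ∀ r ≥ (1 : ℝ), ‖ψ r‖ ≤ C)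
    (hψrad : (fun r : ℝ => deriv ψ r - Complex.I * (k : ℂ) * ψ r)
      =O[atTop] (fun r : ℝ => 1 / r))
    (G : ℝ → ℝ → ℂ)
    (hG : ∀ r r' : ℝ, G r r' = -(φ (min r r') * ψ (max r r')) / W)
    (r1 r2 : ℝ) (hr1 : 0 < r1) (hr12 : r1 ≤ r2) :
    (fun R : ℝ =>
        (∫ r in (0 : ℝ)..R,
          ((-(q r).im : ℝ) : ℂ) * (starRingEnd ℂ) (G r r1) * G r r2)
        + (k : ℂ) * (starRingEnd ℂ) (G R r1) * G R r2
        - (((G r1 r2).im : ℝ) : ℂ))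
      =O[atTop] (fun R : ℝ => 1 / R) := by
  obtain ⟨M, hM⟩ := hqbdd
  obtain ⟨C₀, hC₀⟩ := hψbdd
  have hr2 : (0 : ℝ) < r2 := lt_of_lt_of_le hr1 hr12
  have hcW0 : (starRingEnd ℂ) W ≠ 0 := by simpa using hW0
  have hφc : ContinuousOn φ (Set.Ioi 0) := fun r hr => (hφd r hr).continuousAt.continuousWithinAt
  have hφ'c : ContinuousOn (deriv φ) (Set.Ioi 0) :=
    fun r hr => (hφd2 r hr).continuousAt.continuousWithinAt
  have hψc : ContinuousOn ψ (Set.Ioi 0) := fun r hr => (hψd r hr).continuousAt.continuousWithinAt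
  have hψ'c : ContinuousOn (deriv ψ) (Set.Ioi 0) :=
    fun r hr => (hψd2 r hr).continuousAt.continuousWithinAt
  have hWr : ∀ r > (0 : ℝ), φ r * deriv ψ r - deriv φ r * ψ r = W := fun r hr => by
    have := hW r hr; rwa [wronskian] at this
  -- abbreviations
  have hnc : ∀ z : ℂ, ‖(starRingEnd ℂ) z‖ = ‖z‖ := fun z => by
    rw [starRingEnd_apply, norm_star]
  obtain ⟨K, hKdef⟩ : ∃ K : ℂ, K = 2 * Complex.I * ((starRingEnd ℂ) W * W) := ⟨_, rfl⟩
  obtain ⟨a1, ha1def⟩ : ∃ a : ℂ, a = -((starRingEnd ℂ) (ψ r1) * ψ r2 / K) := ⟨_, rfl⟩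
  obtain ⟨a2, ha2def⟩ : ∃ a : ℂ, a = -((starRingEnd ℂ) (φ r1) * ψ r2 / K) := ⟨_, rfl⟩
  obtain ⟨a3, ha3def⟩ : ∃ a : ℂ, a = -((starRingEnd ℂ) (φ r1) * φ r2 / K) := ⟨_, rfl⟩
  obtain ⟨g1, hg1def⟩ : ∃ g : ℝ → ℂ, g = fun s => a1 * flux φ φ s := ⟨_, rfl⟩
  obtain ⟨g2, hg2def⟩ : ∃ g : ℝ → ℂ, g = fun s => a2 * flux ψ φ s := ⟨_, rfl⟩
  obtain ⟨g3, hg3def⟩ : ∃ g : ℝ → ℂ, g = fun s => a3 * flux ψ ψ s := ⟨_, rfl⟩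
  obtain ⟨n1, hn1def⟩ : ∃ n : ℝ → ℂ, n = fun s =>
    a1 * ((q s - (starRingEnd ℂ) (q s)) * ((starRingEnd ℂ) (φ s) * φ s)) := ⟨_, rfl⟩
  obtain ⟨n2, hn2def⟩ : ∃ n : ℝ → ℂ, n = fun s =>
    a2 * ((q s - (starRingEnd ℂ) (q s)) * ((starRingEnd ℂ) (ψ s) * φ s)) := ⟨_, rfl⟩
  obtain ⟨n3, hn3def⟩ : ∃ n : ℝ → ℂ, n = fun s =>
    a3 * ((q s - (starRingEnd ℂ) (q s)) * ((starRingEnd ℂ) (ψ s) * ψ s)) := ⟨_, rfl⟩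
  -- derivatives of the antiderivatives
  have hg1d : ∀ x > (0 : ℝ), HasDerivAt g1 (n1 x) x := by
    intro x hx
    simp only [hg1def, hn1def]
    exact (flux_hasDerivAt q k φ φ (hφd x hx) (hφd2 x hx) (hφd x hx) (hφd2 x hx)
      (hφeq x hx) (hφeq x hx)).const_mul a1
  have hg2d : ∀ x > (0 : ℝ), HasDerivAt g2 (n2 x) x := by
    intro x hx
    simp only [hg2def, hn2def]
    exact (flux_hasDerivAt q k ψ φ (hψd x hx) (hψd2 x hx) (hφd x hx) (hφd2 x hx)
      (hψeq x hx) (hφeq x hx)).const_mul a2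
  have hg3d : ∀ x > (0 : ℝ), HasDerivAt g3 (n3 x) x := by
    intro x hx
    simp only [hg3def, hn3def]
    exact (flux_hasDerivAt q k ψ ψ (hψd x hx) (hψd2 x hx) (hψd x hx) (hψd2 x hx)
      (hψeq x hx) (hψeq x hx)).const_mul a3
  -- continuity of the n's
  have hqconj : ContinuousOn (fun r => (starRingEnd ℂ) (q r)) (Set.Ioi 0) :=
    Complex.continuous_conj.comp_continuousOn hq
  have hφconj : ContinuousOn (fun r => (starRingEnd ℂ) (φ r)) (Set.Ioi 0) :=
    Complex.continuous_conj.comp_continuousOn hφc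
  have hψconj : ContinuousOn (fun r => (starRingEnd ℂ) (ψ r)) (Set.Ioi 0) :=
    Complex.continuous_conj.comp_continuousOn hψc
  have hn1c : ContinuousOn n1 (Set.Ioi 0) := by
    simp only [hn1def]
    exact continuousOn_const.mul ((hq.sub hqconj).mul (hφconj.mul hφc))
  have hn2c : ContinuousOn n2 (Set.Ioi 0) := by
    simp only [hn2def]
    exact continuousOn_const.mul ((hq.sub hqconj).mul (hψconj.mul hφc))
  have hn3c : ContinuousOn n3 (Set.Ioi 0) := by
    simp only [hn3def]
    exact continuousOn_const.mul ((hq.sub hqconj).mul (hψconj.mul hψc))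
  -- the pointwise algebraic identity used for all three pieces
  have key : ∀ z x1 y1 x2 y2 : ℂ,
      ((-(z.im) : ℝ) : ℂ) * (starRingEnd ℂ) (-(x1 * y1) / W) * (-(x2 * y2) / W)
        = -((starRingEnd ℂ) y1 * y2 / K)
            * ((z - (starRingEnd ℂ) z) * ((starRingEnd ℂ) x1 * x2)) := by
    intro z x1 y1 x2 y2
    rw [hKdef, Complex.sub_conj]
    simp only [map_div₀, map_neg, map_mul]
    push_cast
    field_simp
  -- the three EqOn facts
  have heq1 : Set.EqOn
      (fun r => ((-(q r).im : ℝ) : ℂ) * (starRingEnd ℂ) (G r r1) * G r r2) n1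
      (Set.uIcc 0 r1) := by
    intro r hr
    rw [Set.uIcc_of_le hr1.le] at hr
    have h1 : min r r1 = r := min_eq_left hr.2
    have h2 : max r r1 = r1 := max_eq_right hr.2
    have h3 : min r r2 = r := min_eq_left (hr.2.trans hr12)
    have h4 : max r r2 = r2 := max_eq_right (hr.2.trans hr12)
    simp only [hG, h1, h2, h3, h4, hn1def, ha1def]
    rw [key (q r) (φ r) (ψ r1) (φ r) (ψ r2)]
  have heq2 : Set.EqOn
      (fun r => ((-(q r).im : ℝ) : ℂ) * (starRingEnd ℂ) (G r r1) * G r r2) n2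
      (Set.uIcc r1 r2) := by
    intro r hr
    rw [Set.uIcc_of_le hr12] at hr
    have h1 : min r r1 = r1 := min_eq_right hr.1
    have h2 : max r r1 = r := max_eq_left hr.1
    have h3 : min r r2 = r := min_eq_left hr.2
    have h4 : max r r2 = r2 := max_eq_right hr.2
    simp only [hG, h1, h2, h3, h4, hn2def, ha2def]
    rw [key (q r) (φ r1) (ψ r) (φ r) (ψ r2)]
    ring
  have heq3 : ∀ R : ℝ, r2 ≤ R → Set.EqOn
      (fun r => ((-(q r).im : ℝ) : ℂ) * (starRingEnd ℂ) (G r r1) * G r r2) n3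
      (Set.uIcc r2 R) := by
    intro R hR r hr
    rw [Set.uIcc_of_le hR] at hr
    have h1 : min r r1 = r1 := min_eq_right (hr12.trans hr.1)
    have h2 : max r r1 = r := max_eq_left (hr12.trans hr.1)
    have h3 : min r r2 = r2 := min_eq_right hr.1
    have h4 : max r r2 = r := max_eq_left hr.1
    simp only [hG, h1, h2, h3, h4, hn3def, ha3def]
    rw [key (q r) (φ r1) (ψ r) (φ r2) (ψ r)]
    ring
  -- boundedness of φ near 0, integrability of n1 on (0, r1]
  have hid0 : Tendsto (fun r : ℝ => r) (nhdsWithin 0 (Set.Ioi 0)) (nhds 0) :=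
    tendsto_id.mono_left nhdsWithin_le_nhds
  obtain ⟨Cφ, hCφ⟩ := exists_bound_Ioc hr1 (hφ0.trans (hid0.isBigO_one (F := ℝ))) hφc
  have hCφ0 : 0 ≤ Cφ := le_trans (norm_nonneg _) (hCφ r1 ⟨hr1, le_refl r1⟩)
  have hM0 : 0 ≤ M := le_trans (abs_nonneg _) (hM 1 one_pos)
  have hMn : ∀ r ∈ Set.Ioc (0 : ℝ) r1, ‖n1 r‖ ≤ ‖a1‖ * (2 * M * (Cφ * Cφ)) := by
    intro r hr
    have hsc : ‖q r - (starRingEnd ℂ) (q r)‖ = 2 * |(q r).im| := by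
      rw [Complex.sub_conj]
      rw [norm_mul, Complex.norm_I, mul_one, Complex.norm_real, Real.norm_eq_abs,
        abs_mul, abs_two]
    calc ‖n1 r‖ = ‖a1‖ * (‖q r - (starRingEnd ℂ) (q r)‖ * (‖φ r‖ * ‖φ r‖)) := by
          simp only [hn1def, norm_mul, hnc]
    _ ≤ ‖a1‖ * (2 * M * (Cφ * Cφ)) := by
          rw [hsc]
          gcongr
          · exact hM r hr.1
          · exact hCφ r hr
          · exact hCφ r hr
  have hn1int : IntervalIntegrable n1 volume 0 r1 := by
    rw [intervalIntegrable_iff, Set.uIoc_of_le hr1.le]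
    exact ⟨(hn1c.mono (fun x hx => hx.1)).aestronglyMeasurable measurableSet_Ioc,
      MeasureTheory.HasFiniteIntegral.restrict_of_bounded (C := ‖a1‖ * (2 * M * (Cφ * Cφ)))
        measure_Ioc_lt_top ((ae_restrict_iff' measurableSet_Ioc).mpr (ae_of_all _ hMn))⟩
  -- the boundary term at 0 vanishes
  have hφconjO : (fun r => (starRingEnd ℂ) (φ r)) =O[nhdsWithin 0 (Set.Ioi 0)]
      (fun r : ℝ => r) :=
    (Asymptotics.isBigO_of_le (g := φ) _ (fun x => le_of_eq (hnc (φ x)))).trans hφ0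
  have hφ'conjO : (fun r => (starRingEnd ℂ) (deriv φ r)) =O[nhdsWithin 0 (Set.Ioi 0)]
      (fun _ : ℝ => (1 : ℝ)) :=
    (Asymptotics.isBigO_of_le (g := deriv φ) _ (fun x => le_of_eq (hnc (deriv φ x)))).trans hφ0'
  have t1 : Tendsto (fun r => (starRingEnd ℂ) (φ r) * deriv φ r)
      (nhdsWithin 0 (Set.Ioi 0)) (nhds 0) := by
    refine (hφconjO.mul hφ0').trans_tendsto ?_
    simpa using hid0
  have t2 : Tendsto (fun r => (starRingEnd ℂ) (deriv φ r) * φ r)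
      (nhdsWithin 0 (Set.Ioi 0)) (nhds 0) := by
    refine (hφ'conjO.mul hφ0).trans_tendsto ?_
    simpa using hid0
  have hg10 : Tendsto g1 (nhdsWithin 0 (Set.Ioi 0)) (nhds 0) := by
    have h := (t1.sub t2).const_mul a1
    simp only [sub_zero, mul_zero] at h
    rw [hg1def]
    simpa only [flux] using h
  have hg1r1 : Tendsto g1 (nhdsWithin r1 (Set.Iio r1)) (nhds (g1 r1)) := by
    have hflc : ContinuousAt (flux φ φ) r1 := by
      have c1 := (hφd r1 hr1).continuousAt
      have c2 := (hφd2 r1 hr1).continuousAt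
      exact ((Complex.continuous_conj.continuousAt.comp c1).mul c2).sub
        ((Complex.continuous_conj.continuousAt.comp c2).mul c1)
    rw [hg1def]
    exact ((continuousAt_const.mul hflc).continuousWithinAt :)
  -- FTC on the three pieces
  have hFTC1 : (∫ r in (0 : ℝ)..r1,
      ((-(q r).im : ℝ) : ℂ) * (starRingEnd ℂ) (G r r1) * G r r2) = g1 r1 := by
    rw [intervalIntegral.integral_congr heq1]
    rw [intervalIntegral.integral_eq_sub_of_hasDerivAt_of_tendsto hr1
      (fun x hx => hg1d x hx.1) hn1int hg10 hg1r1, sub_zero]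
  have hFTC2 : (∫ r in r1..r2,
      ((-(q r).im : ℝ) : ℂ) * (starRingEnd ℂ) (G r r1) * G r r2) = g2 r2 - g2 r1 := by
    rw [intervalIntegral.integral_congr heq2]
    refine intervalIntegral.integral_eq_sub_of_hasDerivAt (fun x hx => ?_) ?_
    · rw [Set.uIcc_of_le hr12] at hx
      exact hg2d x (lt_of_lt_of_le hr1 hx.1)
    · refine (hn2c.mono ?_).intervalIntegrable
      rw [Set.uIcc_of_le hr12]
      exact fun x hx => lt_of_lt_of_le hr1 hx.1
  have hFTC3 : ∀ R : ℝ, r2 ≤ R → (∫ r in r2..R,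
      ((-(q r).im : ℝ) : ℂ) * (starRingEnd ℂ) (G r r1) * G r r2) = g3 R - g3 r2 := by
    intro R hR
    rw [intervalIntegral.integral_congr (heq3 R hR)]
    refine intervalIntegral.integral_eq_sub_of_hasDerivAt (fun x hx => ?_) ?_
    · rw [Set.uIcc_of_le hR] at hx
      exact hg3d x (lt_of_lt_of_le hr2 hx.1)
    · refine (hn3c.mono ?_).intervalIntegrable
      rw [Set.uIcc_of_le hR]
      exact fun x hx => lt_of_lt_of_le hr2 hx.1
  -- integrability of the original integrand on the pieces
  have i1 : IntervalIntegrable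
      (fun r => ((-(q r).im : ℝ) : ℂ) * (starRingEnd ℂ) (G r r1) * G r r2) volume 0 r1 := by
    rw [intervalIntegrable_iff, Set.uIoc_of_le hr1.le]
    have h := intervalIntegrable_iff.mp hn1int
    rw [Set.uIoc_of_le hr1.le] at h
    refine h.congr_fun ?_ measurableSet_Ioc
    intro x hx
    exact (heq1 (by rw [Set.uIcc_of_le hr1.le]; exact Set.Ioc_subset_Icc_self hx)).symm
  have i2 : IntervalIntegrable
      (fun r => ((-(q r).im : ℝ) : ℂ) * (starRingEnd ℂ) (G r r1) * G r r2) volume r1 r2 := by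
    have hn2i : IntervalIntegrable n2 volume r1 r2 := by
      refine (hn2c.mono ?_).intervalIntegrable
      rw [Set.uIcc_of_le hr12]
      exact fun x hx => lt_of_lt_of_le hr1 hx.1
    rw [intervalIntegrable_iff, Set.uIoc_of_le hr12]
    have h := intervalIntegrable_iff.mp hn2i
    rw [Set.uIoc_of_le hr12] at h
    refine h.congr_fun ?_ measurableSet_Ioc
    intro x hx
    exact (heq2 (by rw [Set.uIcc_of_le hr12]; exact Set.Ioc_subset_Icc_self hx)).symm
  have i3 : ∀ R : ℝ, r2 ≤ R → IntervalIntegrable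
      (fun r => ((-(q r).im : ℝ) : ℂ) * (starRingEnd ℂ) (G r r1) * G r r2) volume r2 R := by
    intro R hR
    have hn3i : IntervalIntegrable n3 volume r2 R := by
      refine (hn3c.mono ?_).intervalIntegrable
      rw [Set.uIcc_of_le hR]
      exact fun x hx => lt_of_lt_of_le hr2 hx.1
    rw [intervalIntegrable_iff, Set.uIoc_of_le hR]
    have h := intervalIntegrable_iff.mp hn3i
    rw [Set.uIoc_of_le hR] at h
    refine h.congr_fun ?_ measurableSet_Ioc
    intro x hx
    exact ((heq3 R hR) (by rw [Set.uIcc_of_le hR]; exact Set.Ioc_subset_Icc_self hx)).symm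
  -- splitting of the integral
  have hsplit : ∀ R : ℝ, r2 ≤ R → (∫ r in (0 : ℝ)..R,
      ((-(q r).im : ℝ) : ℂ) * (starRingEnd ℂ) (G r r1) * G r r2)
      = g1 r1 + (g2 r2 - g2 r1) + (g3 R - g3 r2) := by
    intro R hR
    have e12 := intervalIntegral.integral_add_adjacent_intervals i1 i2
    have e23 := intervalIntegral.integral_add_adjacent_intervals (i1.trans i2) (i3 R hR)
    rw [← e23, ← e12, hFTC1, hFTC2, hFTC3 R hR]
  -- Wronskian substitutions
  have h2W : φ r2 * deriv ψ r2 - deriv φ r2 * ψ r2 = W := hWr r2 hr2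
  have h1cW : (starRingEnd ℂ) (φ r1) * (starRingEnd ℂ) (deriv ψ r1)
      - (starRingEnd ℂ) (deriv φ r1) * (starRingEnd ℂ) (ψ r1) = (starRingEnd ℂ) W := by
    have := congrArg (starRingEnd ℂ) (hWr r1 hr1)
    simpa only [map_sub, map_mul] using this
  have hne2 : φ r2 * deriv ψ r2 - deriv φ r2 * ψ r2 ≠ 0 := by rw [h2W]; exact hW0
  have hne1 : (starRingEnd ℂ) (φ r1) * (starRingEnd ℂ) (deriv ψ r1)
      - (starRingEnd ℂ) (deriv φ r1) * (starRingEnd ℂ) (ψ r1) ≠ 0 := by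
    rw [h1cW]; exact hcW0
  -- the limiting function
  obtain ⟨TT, hTTdef⟩ : ∃ T : ℝ → ℂ, T = fun s =>
      a3 * ((starRingEnd ℂ) (ψ s) * (deriv ψ s - Complex.I * k * ψ s)
        - (starRingEnd ℂ) (deriv ψ s - Complex.I * k * ψ s) * ψ s) := ⟨_, rfl⟩
  -- bridge: rewrite the coefficients with `I` in the numerator
  have hdenne : (2 * ((starRingEnd ℂ) W * W)) ≠ 0 := by
    simp [hW0, hcW0]
  have hKne : (2 * Complex.I * ((starRingEnd ℂ) W * W)) ≠ 0 := by
    simp [hW0, hcW0, Complex.I_ne_zero]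
  have haux : ∀ x : ℂ, -(x / K) = x * Complex.I / (2 * ((starRingEnd ℂ) W * W)) := by
    intro x
    rw [hKdef, neg_div' , div_eq_div_iff hKne hdenne]
    linear_combination (-(2 * x * ((starRingEnd ℂ) W * W))) * Complex.I_mul_I
  have ha1I : a1 = (starRingEnd ℂ) (ψ r1) * ψ r2 * Complex.I
      / (2 * ((starRingEnd ℂ) W * W)) := by rw [ha1def, haux]
  have ha2I : a2 = (starRingEnd ℂ) (φ r1) * ψ r2 * Complex.I
      / (2 * ((starRingEnd ℂ) W * W)) := by rw [ha2def, haux]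
  have ha3I : a3 = (starRingEnd ℂ) (φ r1) * φ r2 * Complex.I
      / (2 * ((starRingEnd ℂ) W * W)) := by rw [ha3def, haux]
  have himterm : ((-(φ r1 * ψ r2) / W - (starRingEnd ℂ) (-(φ r1 * ψ r2) / W))
        / (2 * Complex.I))
      = ((φ r1 * ψ r2 * (starRingEnd ℂ) W
          - (starRingEnd ℂ) (φ r1) * (starRingEnd ℂ) (ψ r2) * W) * Complex.I)
        / (2 * ((starRingEnd ℂ) W * W)) := by
    simp only [map_div₀, map_neg, map_mul]
    rw [div_sub_div _ _ hW0 hcW0, div_div,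
      div_eq_div_iff (by simp [hW0, hcW0, Complex.I_ne_zero]) hdenne]
    linear_combination (-(2 * W * (starRingEnd ℂ) W * (φ r1 * ψ r2 * (starRingEnd ℂ) W
      - (starRingEnd ℂ) (φ r1) * (starRingEnd ℂ) (ψ r2) * W))) * Complex.I_mul_I
  -- the exact identity for R ≥ r2
  have claim : ∀ R : ℝ, r2 ≤ R →
      ((∫ r in (0 : ℝ)..R, ((-(q r).im : ℝ) : ℂ) * (starRingEnd ℂ) (G r r1) * G r r2)
        + (k : ℂ) * (starRingEnd ℂ) (G R r1) * G R r2
        - (((G r1 r2).im : ℝ) : ℂ)) = TT R := by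
    intro R hR
    have m1 : min R r1 = r1 := min_eq_right (hr12.trans hR)
    have m2 : max R r1 = R := max_eq_left (hr12.trans hR)
    have m3 : min R r2 = r2 := min_eq_right hR
    have m4 : max R r2 = R := max_eq_left hR
    have m5 : min r1 r2 = r1 := min_eq_left hr12
    have m6 : max r1 r2 = r2 := max_eq_right hr12
    rw [hsplit R hR, hG R r1, hG R r2, hG r1 r2, m1, m2, m3, m4, m5, m6,
      Complex.im_eq_sub_conj, himterm]
    simp only [hTTdef, hg1def, hg2def, hg3def, ha1I, ha2I, ha3I, flux,
      map_sub, map_mul, map_neg, map_div₀, Complex.conj_I, Complex.conj_ofReal]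
    linear_combination
      (-(Complex.I / 2) * ((starRingEnd ℂ) W * W)⁻¹
          * ((starRingEnd ℂ) (φ r1) * (starRingEnd ℂ) (ψ r2))) * h2W
      + ((Complex.I / 2) * ((starRingEnd ℂ) W * W)⁻¹ * (φ r1 * ψ r2)) * h1cW
      + ((k : ℂ) * (starRingEnd ℂ) (φ r1) * φ r2 * (starRingEnd ℂ) (ψ R) * ψ R
          * ((starRingEnd ℂ) W * W)⁻¹) * Complex.I_mul_I
  -- `TT` is `O(1/R)`
  have hTTO : TT =O[atTop] (fun R : ℝ => 1 / R) := by
    have hψO : ψ =O[atTop] (fun _ : ℝ => (1 : ℝ)) := by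
      refine Asymptotics.IsBigO.of_bound C₀ ?_
      filter_upwards [eventually_ge_atTop (1 : ℝ)] with r hr
      simpa using hC₀ r hr
    have hcψO : (fun s => (starRingEnd ℂ) (ψ s)) =O[atTop] (fun _ : ℝ => (1 : ℝ)) :=
      (Asymptotics.isBigO_of_le (g := ψ) _ (fun x => le_of_eq (hnc (ψ x)))).trans hψO
    have hcee : (fun s => (starRingEnd ℂ) (deriv ψ s - Complex.I * k * ψ s))
        =O[atTop] (fun r : ℝ => 1 / r) :=
      (Asymptotics.isBigO_of_le (g := fun s => deriv ψ s - Complex.I * k * ψ s) _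
        (fun x => le_of_eq (hnc _))).trans hψrad
    have h1 : (fun s => (starRingEnd ℂ) (ψ s) * (deriv ψ s - Complex.I * k * ψ s))
        =O[atTop] (fun r : ℝ => 1 / r) := by
      simpa using hcψO.mul hψrad
    have h2 : (fun s => (starRingEnd ℂ) (deriv ψ s - Complex.I * k * ψ s) * ψ s)
        =O[atTop] (fun r : ℝ => 1 / r) := by
      simpa using hcee.mul hψO
    rw [hTTdef]
    exact (h1.sub h2).const_mul_left a3
  have hev : (fun R : ℝ =>
      (∫ r in (0 : ℝ)..R, ((-(q r).im : ℝ) : ℂ) * (starRingEnd ℂ) (G r r1) * G r r2)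
        + (k : ℂ) * (starRingEnd ℂ) (G R r1) * G R r2
        - (((G r1 r2).im : ℝ) : ℂ)) =ᶠ[atTop] TT := by
    filter_upwards [eventually_ge_atTop r2] with R hR using claim R hR
  exact hev.trans_isBigO hTTO
end

section
/- Let k > 0 and H1, H2 ∈ ℂ ∖ {0}. For s ∈ ℂ and j = 1,2 define G_j(s) = (i/(2k))·( conj(H_j) − s·H_j )·H_j. Then the map s ↦ ( Im G_1(s), Im G_2(s) ) from ℂ to ℝ² is injective if and only if Im( H_1²·conj(H_2²) ) ≠ 0. Moreover, writing H_j = μ_j·exp(i·ϑ_j/2) with μ_j > 0 and ϑ_j ∈ ℝ, the condition Im( H_1²·conj(H_2²) ) ≠ 0 is equivalent to sin(ϑ_1 − ϑ_2) ≠ 0. -/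
/-- Core of Lemma 3.5: with `G_j(s) = (i/(2k)) (conj(H_j) − s H_j) H_j`, the map
`s ↦ (Im G_1(s), Im G_2(s))` is injective iff `Im(H_1² conj(H_2²)) ≠ 0`; writing
`H_j = μ_j exp(iϑ_j/2)` this condition is equivalent to `sin(ϑ_1 − ϑ_2) ≠ 0`. -/
theorem stmt_11 (k : ℝ) (hk : 0 < k) (H1 H2 : ℂ) (hH1 : H1 ≠ 0) (hH2 : H2 ≠ 0)
    (μ1 μ2 ϑ1 ϑ2 : ℝ) (hμ1 : 0 < μ1) (hμ2 : 0 < μ2)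
    (hpolar1 : H1 = (μ1 : ℂ) * Complex.exp (Complex.I * (ϑ1 : ℂ) / 2))
    (hpolar2 : H2 = (μ2 : ℂ) * Complex.exp (Complex.I * (ϑ2 : ℂ) / 2)) :
    (Function.Injective (fun s : ℂ =>
        (((Complex.I / (2 * (k : ℂ))) * ((starRingEnd ℂ) H1 - s * H1) * H1).im,
         ((Complex.I / (2 * (k : ℂ))) * ((starRingEnd ℂ) H2 - s * H2) * H2).im))
      ↔ (H1 ^ 2 * (starRingEnd ℂ) (H2 ^ 2)).im ≠ 0) ∧
    ((H1 ^ 2 * (starRingEnd ℂ) (H2 ^ 2)).im ≠ 0 ↔ Real.sin (ϑ1 - ϑ2) ≠ 0) := by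
  have hk2 : (2*k) ≠ 0 := by positivity
  have himG : ∀ (H s : ℂ), ((Complex.I / (2 * (k : ℂ))) * ((starRingEnd ℂ) H - s * H) * H).im
      = (Complex.normSq H - (s * H^2).re) / (2*k) := by
    intro H s
    have h2 : (2 * (k:ℂ)) = ((2*k : ℝ) : ℂ) := by push_cast; ring
    rw [h2]
    simp [div_eq_mul_inv, ← Complex.ofReal_inv, Complex.mul_im, Complex.mul_re,
      Complex.normSq_apply, pow_two]
    field_simp
    ring
  have hD : (H1 ^ 2 * (starRingEnd ℂ) (H2 ^ 2)).im
      = (H1^2).im * (H2^2).re - (H1^2).re * (H2^2).im := by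
    simp only [Complex.mul_im, Complex.conj_re, Complex.conj_im]
    ring
  constructor
  · rw [hD]
    constructor
    · intro hinj hD0
      have hs0 : (Complex.I * (starRingEnd ℂ) (H1^2)) ≠ 0 := by
        simp [Complex.I_ne_zero, pow_ne_zero, hH1]
      apply hs0
      apply hinj
      show (_, _) = (_, _)
      have e1 : (Complex.I * (starRingEnd ℂ) (H1^2) * H1^2).re = 0 := by
        simp only [Complex.mul_re, Complex.mul_im, Complex.I_re, Complex.I_im,
          Complex.conj_re, Complex.conj_im]
        ring
      have e2 : (Complex.I * (starRingEnd ℂ) (H1^2) * H2^2).re = 0 := by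
        simp only [Complex.mul_re, Complex.mul_im, Complex.I_re, Complex.I_im,
          Complex.conj_re, Complex.conj_im]
        linear_combination hD0
      simp only [himG, Prod.mk.injEq]
      rw [e1, e2]
      norm_num
    · intro hD0 s t hst
      simp only [Prod.mk.injEq, himG] at hst
      obtain ⟨h1', h2'⟩ := hst
      field_simp at h1' h2'
      simp only [Complex.mul_re] at h1' h2'
      have hre : (s.re - t.re) * ((H1^2).im * (H2^2).re - (H1^2).re * (H2^2).im) = 0 := by
        linear_combination (H2^2).im * h1' - (H1^2).im * h2'
      have him : (s.im - t.im) * ((H1^2).im * (H2^2).re - (H1^2).re * (H2^2).im) = 0 := by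
        linear_combination (H2^2).re * h1' - (H1^2).re * h2'
      have hre0 := (mul_eq_zero.mp hre).resolve_right hD0
      have him0 := (mul_eq_zero.mp him).resolve_right hD0
      exact Complex.ext (by linarith) (by linarith)
  · have e1 : H1^2 = ((μ1^2 : ℝ) : ℂ) * Complex.exp (((ϑ1 : ℝ):ℂ) * Complex.I) := by
      rw [hpolar1, mul_pow, ← Complex.exp_nat_mul]
      push_cast; ring_nf
    have e2 : (starRingEnd ℂ) (H2^2)
        = ((μ2^2 : ℝ) : ℂ) * Complex.exp ((-(ϑ2 : ℝ):ℂ) * Complex.I) := by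
      rw [hpolar2, mul_pow, ← Complex.exp_nat_mul, map_mul, ← Complex.exp_conj]
      simp only [map_mul, map_div₀, Complex.conj_I, map_ofNat, map_natCast, Complex.conj_ofReal, map_pow]
      push_cast; ring_nf
    have key : (H1 ^ 2 * (starRingEnd ℂ) (H2 ^ 2)).im = μ1^2 * μ2^2 * Real.sin (ϑ1 - ϑ2) := by
      rw [e1, e2]
      have h3 : ((μ1^2 : ℝ) : ℂ) * Complex.exp (((ϑ1 : ℝ):ℂ) * Complex.I) *
          (((μ2^2 : ℝ) : ℂ) * Complex.exp ((-(ϑ2 : ℝ):ℂ) * Complex.I))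
          = ((μ1^2 * μ2^2 : ℝ) : ℂ) * Complex.exp (((ϑ1 - ϑ2 : ℝ):ℂ) * Complex.I) := by
        rw [mul_mul_mul_comm, ← Complex.exp_add]
        push_cast; ring_nf
      rw [h3, Complex.exp_mul_I]
      simp only [← Complex.ofReal_cos, ← Complex.ofReal_sin, Complex.mul_im, Complex.add_im,
        Complex.add_re, Complex.ofReal_re, Complex.ofReal_im, Complex.mul_re,
        Complex.I_re, Complex.I_im]
      ring
    rw [key]
    have hμ : μ1^2 * μ2^2 ≠ 0 := by positivity
    constructor
    · intro h hs; exact h (by rw [hs, mul_zero])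
    · intro h hs
      exact h ((mul_eq_zero.mp hs).resolve_left hμ)
end

section
/- Let (φ_ℓ)_{ℓ≥0} be a sequence of continuous complex-valued functions on (0,∞) such that: (i) for each ℓ, the zero set { r > 0 : φ_ℓ(r) = 0 } has no accumulation point in (0,∞); and (ii) for every R0 > 0, sup_{0 < r ≤ R0} | r^{−ℓ−1}·φ_ℓ(r) − 1 | → 0 as ℓ → ∞. Then the set Σ = { r > 0 : φ_ℓ(r) = 0 for some ℓ ≥ 0 } has no accumulation point in (0,∞). -/
open Filter Topology

/-- Abstract form of the second assertion of Lemma 3.6: if each `φ_ℓ` is continuous on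
`(0,∞)` with zero set having no accumulation point in `(0,∞)`, and
`sup_{0 < r ≤ R0} |r^{−ℓ−1} φ_ℓ(r) − 1| → 0` as `ℓ → ∞` for every `R0 > 0`, then the set
`Σ = { r > 0 : φ_ℓ(r) = 0 for some ℓ }` has no accumulation point in `(0,∞)`. -/
theorem stmt_15 (φ : ℕ → ℝ → ℂ)
    (hcont : ∀ ℓ : ℕ, ContinuousOn (φ ℓ) (Set.Ioi 0))
    (hzeros : ∀ ℓ : ℕ, ∀ x ∈ Set.Ioi (0 : ℝ),
      ¬ AccPt x (Filter.principal {r : ℝ | 0 < r ∧ φ ℓ r = 0}))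
    (hunif : ∀ R0 > (0 : ℝ), ∀ e > (0 : ℝ), ∃ L : ℕ, ∀ ℓ ≥ L,
      ∀ r : ℝ, 0 < r → r ≤ R0 → ‖φ ℓ r / ((r ^ (ℓ + 1) : ℝ) : ℂ) - 1‖ < e) :
    ∀ x ∈ Set.Ioi (0 : ℝ),
      ¬ AccPt x (Filter.principal {r : ℝ | 0 < r ∧ ∃ ℓ : ℕ, φ ℓ r = 0}) := by
  intro x hx hacc
  simp only [Set.mem_Ioi] at hx
  obtain ⟨L, hL⟩ := hunif (x + 1) (by linarith) (1/2) (by norm_num)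
  -- No point of (0, x+1) is a zero of φ ℓ for ℓ ≥ L
  have hsub : {r : ℝ | 0 < r ∧ ∃ ℓ : ℕ, φ ℓ r = 0} ∩ Set.Iio (x + 1) ⊆
      {r : ℝ | 0 < r ∧ ∃ ℓ < L, φ ℓ r = 0} := by
    rintro r ⟨⟨hr, ℓ, hφ⟩, hrlt⟩
    refine ⟨hr, ℓ, ?_, hφ⟩
    by_contra h
    push_neg at h
    have := hL ℓ h r hr (le_of_lt hrlt)
    rw [hφ] at this
    norm_num at this
  have hU : Set.Iio (x + 1) ∈ nhds x := Iio_mem_nhds (by linarith)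
  have haccT : AccPt x (Filter.principal {r : ℝ | 0 < r ∧ ∃ ℓ < L, φ ℓ r = 0}) := by
    refine Filter.NeBot.mono hacc (le_inf inf_le_left ?_)
    have h1 : 𝓝[≠] x ⊓ Filter.principal {r : ℝ | 0 < r ∧ ∃ ℓ : ℕ, φ ℓ r = 0} ≤
        Filter.principal ({r : ℝ | 0 < r ∧ ∃ ℓ : ℕ, φ ℓ r = 0} ∩ Set.Iio (x + 1)) := by
      rw [← Filter.inf_principal]
      exact le_inf (le_trans inf_le_right le_rfl)
        (le_trans inf_le_left (le_trans nhdsWithin_le_nhds (Filter.le_principal_iff.mpr hU)))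
    exact le_trans h1 (Filter.principal_mono.mpr hsub)
  -- Finite union of zero sets has no accumulation point
  have key : ∀ n : ℕ, ¬ AccPt x (Filter.principal {r : ℝ | 0 < r ∧ ∃ ℓ < n, φ ℓ r = 0}) := by
    intro n
    induction n with
    | zero =>
      intro haccT
      simp only [Nat.not_lt_zero, false_and, exists_const, and_false,
        Set.setOf_false, Filter.principal_empty] at haccT
      exact (by simpa [AccPt] using haccT : Filter.NeBot (⊥ : Filter ℝ)).ne rfl
    | succ m ih =>
      intro haccT
      have hsplit : {r : ℝ | 0 < r ∧ ∃ ℓ < m + 1, φ ℓ r = 0} =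
          {r : ℝ | 0 < r ∧ ∃ ℓ < m, φ ℓ r = 0} ∪ {r : ℝ | 0 < r ∧ φ m r = 0} := by
        ext r
        simp only [Set.mem_setOf_eq, Set.mem_union, Nat.lt_succ_iff_lt_or_eq]
        constructor
        · rintro ⟨hr, ℓ, hℓ | rfl, hφ⟩
          · exact Or.inl ⟨hr, ℓ, hℓ, hφ⟩
          · exact Or.inr ⟨hr, hφ⟩
        · rintro (⟨hr, ℓ, hℓ, hφ⟩ | ⟨hr, hφ⟩)
          · exact ⟨hr, ℓ, Or.inl hℓ, hφ⟩
          · exact ⟨hr, m, Or.inr rfl, hφ⟩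
      rw [hsplit, ← Filter.sup_principal, accPt_sup] at haccT
      rcases haccT with h | h
      · exact ih h
      · exact hzeros m x (Set.mem_Ioi.mpr hx) h
  exact key L haccT
end
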